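/- arXiv:2105.11247 — 5 statements merged into one kernel-verified Lean document; each statement's English description precedes it below -/
import Mathlib

section
/- If G is a finite subgroup of PGL(2,F) that fixes a point of P^1(F), and |G| is not divisible by the characteristic of F, then G is cyclic. -/
open Matrix Polynomial
open scoped LinearAlgebra.Projectivization MatrixGroups Pointwise

namespace PaperPGL

section Defs

variable (F : Type*) [Field F]

lemma glInj (g : GL (Fin 2) F) :
    Function.Injective ((g : Matrix (Fin 2) (Fin 2) F).mulVecLin) := by
  intro x y h
  have h2 := congrArg ((↑g⁻¹ : Matrix (Fin 2) (Fin 2) F).mulVecLin) h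
  simp only [Matrix.mulVecLin_apply, Matrix.mulVec_mulVec] at h2
  rw [← Matrix.GeneralLinearGroup.coe_mul, inv_mul_cancel] at h2
  simpa using h2

noncomputable instance : MulAction (GL (Fin 2) F) (ℙ F (Fin 2 → F)) where
  smul g x := Projectivization.map ((g : Matrix (Fin 2) (Fin 2) F).mulVecLin) (glInj F g) x
  one_smul x := by
    show Projectivization.map _ _ x = x
    have h1 : ((1 : GL (Fin 2) F) : Matrix (Fin 2) (Fin 2) F).mulVecLin
        = (LinearMap.id : (Fin 2 → F) →ₗ[F] (Fin 2 → F)) := by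
      rw [Matrix.GeneralLinearGroup.coe_one, Matrix.mulVecLin_one]
    simp only [h1]
    rw [Projectivization.map_id]
    rfl
  mul_smul g h x := by
    show Projectivization.map _ _ x = Projectivization.map _ _ (Projectivization.map _ _ x)
    have h1 : ((g * h : GL (Fin 2) F) : Matrix (Fin 2) (Fin 2) F).mulVecLin
        = ((g : Matrix (Fin 2) (Fin 2) F).mulVecLin).comp
          ((h : Matrix (Fin 2) (Fin 2) F).mulVecLin) := by
      rw [← Matrix.mulVecLin_mul, ← Matrix.GeneralLinearGroup.coe_mul]
    simp only [h1]
    rw [Projectivization.map_comp]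
    rfl

/-- The image of `GL(2,F)` in the permutations of the projective line: `PGL(2,F)`
acting faithfully on `ℙ¹(F)`. -/
noncomputable def toPGL : GL (Fin 2) F →* Equiv.Perm (ℙ F (Fin 2 → F)) :=
  MulAction.toPermHom _ _

/-- `PGL(2,F)` as a subgroup of the permutation group of the projective line `ℙ¹(F)`. -/
noncomputable def pgl : Subgroup (Equiv.Perm (ℙ F (Fin 2 → F))) :=
  (toPGL F).range

/-- Entrywise base change `GL(2,F) →* GL(2,K)` along a ring hom. -/
noncomputable def baseChange (F K : Type*) [Field F] [Field K] (phi : F →+* K) :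
    GL (Fin 2) F →* GL (Fin 2) K :=
  Units.map phi.mapMatrix.toMonoidHom

end Defs

section test
variable {F : Type*} [Field F]

lemma toPGL_apply_mk (g : GL (Fin 2) F) (v : Fin 2 → F) (hv : v ≠ 0) :
    toPGL F g (Projectivization.mk F v hv) =
      Projectivization.mk F ((g : Matrix (Fin 2) (Fin 2) F).mulVec v)
        (fun h => hv (glInj F g (by simpa using h))) := by
  have h0 : toPGL F g (Projectivization.mk F v hv) = g • Projectivization.mk F v hv := rfl
  rw [h0]
  show Projectivization.map _ (glInj F g) _ = _
  rw [Projectivization.map_mk]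
  rfl

/-- Uniqueness of the scalar. -/
lemma smul_eq_smul {a b : F} {v : Fin 2 → F} (hv : v ≠ 0) (h : a • v = b • v) : a = b := by
  by_contra hab
  apply hv
  have : (a - b) • v = 0 := by rw [sub_smul, h, sub_self]
  rcases smul_eq_zero.1 this with h' | h'
  · exact absurd (sub_eq_zero.1 h') hab
  · exact h'

/-- Eigenvalue extraction. -/
lemma eigen {g : GL (Fin 2) F} {v : Fin 2 → F} (hv : v ≠ 0)
    (h : toPGL F g (Projectivization.mk F v hv) = Projectivization.mk F v hv) :
    ∃ a : F, a ≠ 0 ∧ (g : Matrix (Fin 2) (Fin 2) F).mulVec v = a • v := by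
  rw [toPGL_apply_mk] at h
  rw [Projectivization.mk_eq_mk_iff] at h
  obtain ⟨a, ha⟩ := h
  refine ⟨a, a.ne_zero, ha.symm⟩

/-- An element of the kernel of `toPGL` is scalar. -/
lemma ker_scalar {g : GL (Fin 2) F} (hg : toPGL F g = 1) :
    ∃ c : F, c ≠ 0 ∧ (g : Matrix (Fin 2) (Fin 2) F) = c • 1 := by
  set M : Matrix (Fin 2) (Fin 2) F := (g : Matrix (Fin 2) (Fin 2) F)
  have hfix : ∀ (v : Fin 2 → F) (hv : v ≠ 0),
      toPGL F g (Projectivization.mk F v hv) = Projectivization.mk F v hv := by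
    intro v hv; rw [hg]; rfl
  have h0 : (Pi.single 0 1 : Fin 2 → F) ≠ 0 := by
    intro h; have := congrFun h 0; simp at this
  have h1 : (Pi.single 1 1 : Fin 2 → F) ≠ 0 := by
    intro h; have := congrFun h 1; simp at this
  have h01 : (Pi.single 0 1 + Pi.single 1 1 : Fin 2 → F) ≠ 0 := by
    intro h; have := congrFun h 0; simp at this
  obtain ⟨a, ha0, ha⟩ := eigen h0 (hfix _ h0)
  obtain ⟨b, hb0, hb⟩ := eigen h1 (hfix _ h1)
  obtain ⟨c, hc0, hc⟩ := eigen h01 (hfix _ h01)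
  rw [Matrix.mulVec_add, ha, hb] at hc
  have hac : a = c := by
    have := congrFun hc 0; simpa using this
  have hbc : b = c := by
    have := congrFun hc 1; simpa using this
  refine ⟨c, hc0, ?_⟩
  have ha' : M.mulVec (Pi.single 0 1) = c • (Pi.single 0 1 : Fin 2 → F) := by
    rw [← hac]; exact ha
  have hb' : M.mulVec (Pi.single 1 1) = c • (Pi.single 1 1 : Fin 2 → F) := by
    rw [← hbc]; exact hb
  rw [Matrix.mulVec_single] at ha' hb'
  have e00 : M 0 0 = c := by simpa using congrFun ha' 0
  have e10 : M 1 0 = 0 := by simpa using congrFun ha' 1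
  have e01 : M 0 1 = 0 := by simpa using congrFun hb' 0
  have e11 : M 1 1 = c := by simpa using congrFun hb' 1
  ext i j
  fin_cases i <;> fin_cases j <;> simp [Matrix.one_apply, e00, e10, e01, e11]

lemma chi_welldef {g g' : GL (Fin 2) F} (hgg : toPGL F g = toPGL F g')
    {v : Fin 2 → F} (hv : v ≠ 0) {a a' : F}
    (ha : (g : Matrix (Fin 2) (Fin 2) F).mulVec v = a • v)
    (ha' : (g' : Matrix (Fin 2) (Fin 2) F).mulVec v = a' • v) :
    a ^ 2 * ((g' : Matrix (Fin 2) (Fin 2) F)).det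
      = a' ^ 2 * ((g : Matrix (Fin 2) (Fin 2) F)).det := by
  have hk : toPGL F (g⁻¹ * g') = 1 := by
    rw [_root_.map_mul, _root_.map_inv, hgg, inv_mul_cancel]
  obtain ⟨c, hc0, hc⟩ := ker_scalar hk
  have hm : (g' : Matrix (Fin 2) (Fin 2) F) = c • (g : Matrix (Fin 2) (Fin 2) F) := by
    have : g' = g * (g⁻¹ * g') := by group
    rw [this, Matrix.GeneralLinearGroup.coe_mul, hc, Matrix.mul_smul, mul_one]
  have hav : a' • v = (c * a) • v := by
    rw [← ha', hm, Matrix.smul_mulVec, ha, smul_smul]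
  have haa : a' = c * a := smul_eq_smul hv hav
  rw [hm, Matrix.det_smul, haa]
  simp [Fintype.card_fin]
  ring

lemma toPGL_scalar {g : GL (Fin 2) F} {c : F} (hc : c ≠ 0)
    (h : (g : Matrix (Fin 2) (Fin 2) F) = c • 1) : toPGL F g = 1 := by
  apply Equiv.ext
  intro x
  induction x using Projectivization.ind with
  | h v hv =>
    rw [toPGL_apply_mk]
    show _ = Projectivization.mk F v hv
    rw [Projectivization.mk_eq_mk_iff']
    exact ⟨c, by rw [h, Matrix.smul_mulVec, Matrix.one_mulVec]⟩

lemma sq_fin_two (A : Matrix (Fin 2) (Fin 2) F) :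
    A * A = (A 0 0 + A 1 1) • A
      - (A 0 0 * A 1 1 - A 0 1 * A 1 0) • (1 : Matrix (Fin 2) (Fin 2) F) := by
  ext i j
  fin_cases i <;> fin_cases j <;>
    · simp [Matrix.mul_apply, Fin.sum_univ_two, Matrix.one_apply]
      ring

lemma pow_one_add {N : Matrix (Fin 2) (Fin 2) F} (hN : N * N = 0) (k : ℕ) :
    (1 + N) ^ k = 1 + (k : F) • N := by
  induction k with
  | zero => simp
  | succ k ih =>
    rw [pow_succ, ih, add_mul, mul_add, mul_add, one_mul, mul_one, smul_mul_assoc, hN,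
      smul_zero, add_zero]
    push_cast
    rw [add_smul, one_smul, one_mul, add_comm ((k : F) • N) N, add_assoc]

end test

/-- A finite subgroup of `PGL(2,F)` fixing a point of `ℙ¹(F)`, of order not divisible by
the characteristic of `F`, is cyclic. -/
theorem stmt1 (F : Type*) [Field F]
    (G : Subgroup (Equiv.Perm (ℙ F (Fin 2 → F)))) (hG : G ≤ pgl F) (hfin : Finite G)
    (hfix : ∃ z : ℙ F (Fin 2 → F), ∀ σ ∈ G, σ z = z)
    (hchar : ¬ (ringChar F ∣ Nat.card G)) :
    IsCyclic G := by
  haveI := hfin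
  obtain ⟨z, hz⟩ := hfix
  set v : Fin 2 → F := z.rep with hvdef
  have hv : v ≠ 0 := z.rep_nonzero
  have hmk : Projectivization.mk F v hv = z := z.mk_rep
  have lift : ∀ σ : G, ∃ g : GL (Fin 2) F, toPGL F g = (σ : Equiv.Perm (ℙ F (Fin 2 → F))) :=
    fun σ => hG σ.2
  choose l hl using lift
  have fixz : ∀ σ : G,
      toPGL F (l σ) (Projectivization.mk F v hv) = Projectivization.mk F v hv := by
    intro σ
    rw [hmk, hl σ]
    exact hz σ σ.2
  have eig' : ∀ σ : G, ∃ a : F, a ≠ 0 ∧ ((l σ : Matrix (Fin 2) (Fin 2) F)).mulVec v = a • v :=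
    fun σ => eigen hv (fixz σ)
  choose lam hlam0 hlam using eig'
  have hdet : ∀ σ : G, ((l σ : Matrix (Fin 2) (Fin 2) F)).det ≠ 0 := fun σ =>
    ((Matrix.isUnit_iff_isUnit_det _).1 (l σ).isUnit).ne_zero
  -- the character χ(σ) = λ(σ)² / det(σ)
  have map_one' : lam 1 ^ 2 * ((l 1 : Matrix (Fin 2) (Fin 2) F)).det⁻¹ = 1 := by
    have h1 : toPGL F (l 1) = toPGL F (1 : GL (Fin 2) F) := by
      rw [hl 1, OneMemClass.coe_one, _root_.map_one]
    have key := chi_welldef h1 hv (hlam 1)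
      (by rw [Matrix.GeneralLinearGroup.coe_one, Matrix.one_mulVec, one_smul])
    rw [Matrix.GeneralLinearGroup.coe_one, Matrix.det_one] at key
    have hd1 : ((l 1 : Matrix (Fin 2) (Fin 2) F)).det = lam 1 ^ 2 := by linear_combination -key
    rw [hd1]
    exact mul_inv_cancel₀ (pow_ne_zero _ (hlam0 1))
  have map_mul' : ∀ σ τ : G,
      lam (σ * τ) ^ 2 * ((l (σ * τ) : Matrix (Fin 2) (Fin 2) F)).det⁻¹ =
        (lam σ ^ 2 * ((l σ : Matrix (Fin 2) (Fin 2) F)).det⁻¹) *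
          (lam τ ^ 2 * ((l τ : Matrix (Fin 2) (Fin 2) F)).det⁻¹) := by
    intro σ τ
    have h1 : toPGL F (l (σ * τ)) = toPGL F (l σ * l τ) := by
      rw [_root_.map_mul, hl, hl, hl]
      rfl
    have ha' : ((l σ * l τ : GL (Fin 2) F) : Matrix (Fin 2) (Fin 2) F).mulVec v
        = (lam σ * lam τ) • v := by
      rw [Matrix.GeneralLinearGroup.coe_mul, ← Matrix.mulVec_mulVec, hlam τ,
        Matrix.mulVec_smul, hlam σ, smul_smul, mul_comm]
    have key := chi_welldef h1 hv (hlam (σ * τ)) ha'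
    rw [Matrix.GeneralLinearGroup.coe_mul, Matrix.det_mul] at key
    field_simp [hdet σ, hdet τ, hdet (σ * τ)]
    linear_combination key
  let χ : G →* F :=
    { toFun := fun σ => lam σ ^ 2 * ((l σ : Matrix (Fin 2) (Fin 2) F)).det⁻¹
      map_one' := map_one'
      map_mul' := map_mul' }
  have hinj : Function.Injective χ := by
    rw [injective_iff_map_eq_one]
    intro σ hσ
    have hσ' : lam σ ^ 2 * ((l σ : Matrix (Fin 2) (Fin 2) F)).det⁻¹ = 1 := hσ
    set M : Matrix (Fin 2) (Fin 2) F := (l σ : Matrix (Fin 2) (Fin 2) F) with hM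
    set a : F := lam σ with haa
    have ha0 : a ≠ 0 := hlam0 σ
    have hdm : M.det = a ^ 2 := by
      field_simp [hdet σ] at hσ'
      exact ((div_eq_one_iff_eq (hdet σ)).1 hσ').symm
    set N : Matrix (Fin 2) (Fin 2) F := M - a • (1 : Matrix (Fin 2) (Fin 2) F) with hN
    have hNv : N.mulVec v = 0 := by
      rw [hN, Matrix.sub_mulVec, hlam σ, Matrix.smul_mulVec, Matrix.one_mulVec, sub_self]
    have hdetN : N.det = 0 := by
      by_contra hd
      exact hv (Matrix.eq_zero_of_mulVec_eq_zero hd hNv)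
    have e00 : N 0 0 = M 0 0 - a := by simp [hN, Matrix.one_apply]
    have e01 : N 0 1 = M 0 1 := by simp [hN, Matrix.one_apply]
    have e10 : N 1 0 = M 1 0 := by simp [hN, Matrix.one_apply]
    have e11 : N 1 1 = M 1 1 - a := by simp [hN, Matrix.one_apply]
    have h1 : (M 0 0 - a) * (M 1 1 - a) - M 0 1 * M 1 0 = 0 := by
      rw [← e00, ← e01, ← e10, ← e11, ← Matrix.det_fin_two]
      exact hdetN
    have h2 : M 0 0 * M 1 1 - M 0 1 * M 1 0 = a ^ 2 := by
      rw [← Matrix.det_fin_two]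
      exact hdm
    have htr : N 0 0 + N 1 1 = 0 := by
      have key : (M 0 0 + M 1 1 - 2 * a) * a = 0 := by linear_combination h2 - h1
      have key2 := (mul_eq_zero.1 key).resolve_right ha0
      rw [e00, e11]
      linear_combination key2
    have hNN : N * N = 0 := by
      have hd : N 0 0 * N 1 1 - N 0 1 * N 1 0 = 0 := by
        rw [← Matrix.det_fin_two]
        exact hdetN
      rw [sq_fin_two, htr, hd, zero_smul, zero_smul, sub_zero]
    set n : ℕ := orderOf σ with hn
    have hn0 : n ≠ 0 := (orderOf_pos σ).ne'
    have hnF : (n : F) ≠ 0 := by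
      intro h
      exact hchar (dvd_trans ((ringChar.spec F n).mp h) (orderOf_dvd_natCard σ))
    have hσn : toPGL F ((l σ) ^ n) = 1 := by
      rw [map_pow, hl σ, ← SubmonoidClass.coe_pow, hn, pow_orderOf_eq_one σ]
      rfl
    obtain ⟨c, hc0, hc⟩ := ker_scalar hσn
    have hMn : M ^ n = c • 1 := by
      calc M ^ n = (((l σ) ^ n : GL (Fin 2) F) : Matrix (Fin 2) (Fin 2) F) :=
            (Units.val_pow_eq_pow_val _ _).symm
        _ = c • 1 := hc
    set N' : Matrix (Fin 2) (Fin 2) F := a⁻¹ • N with hN'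
    have hN'2 : N' * N' = 0 := by
      rw [hN', smul_mul_assoc, mul_smul_comm, hNN, smul_zero, smul_zero]
    have hMP : M = a • (1 + N') := by
      rw [hN', smul_add, smul_smul, mul_inv_cancel₀ ha0, one_smul, hN, add_comm,
        sub_add_cancel]
    have hpow : M ^ n = a ^ n • (1 + (n : F) • N') := by
      rw [hMP, _root_.smul_pow, pow_one_add hN'2]
    have heq : (a ^ n * (n : F)) • N' = (c - a ^ n) • (1 : Matrix (Fin 2) (Fin 2) F) := by
      have h3 := hMn
      rw [hpow, smul_add, smul_smul] at h3
      rw [sub_smul]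
      exact eq_sub_of_add_eq' h3
    have hc2 : (c - a ^ n) * (c - a ^ n) = 0 := by
      have h4 := congrArg (fun X => X * X) heq
      rw [smul_mul_assoc, mul_smul_comm, hN'2, smul_zero, smul_zero, smul_mul_assoc,
        mul_smul_comm, smul_smul, one_mul] at h4
      have h5 := congrFun (congrFun h4.symm 0) 0
      simpa [Matrix.one_apply] using h5
    have hca : c = a ^ n := by
      rcases mul_eq_zero.1 hc2 with h | h <;> · rw [sub_eq_zero] at h; exact h
    have hN'0 : N' = 0 := by
      rw [hca, sub_self, zero_smul] at heq
      rcases smul_eq_zero.1 heq with h | h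
      · exact absurd h (mul_ne_zero (pow_ne_zero _ ha0) hnF)
      · exact h
    have hMa : (l σ : Matrix (Fin 2) (Fin 2) F) = a • 1 := by
      rw [← hM, hMP, hN'0, add_zero]
    have hσ1 : (σ : Equiv.Perm (ℙ F (Fin 2 → F))) = 1 := by
      rw [← hl σ]
      exact toPGL_scalar ha0 hMa
    exact Subtype.ext hσ1
  exact isCyclic_of_subgroup_isDomain χ hinj


end PaperPGL
end

section
/- If G is a finite subgroup of PGL(2,F) that fixes a point of P^1(F), and the characteristic p of F divides |G|, then G has a normal elementary abelian p-subgroup whose quotient is cyclic of order coprime to p. -/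
open Matrix Polynomial
open scoped LinearAlgebra.Projectivization MatrixGroups Pointwise

namespace PaperPGL

section Aux

variable {F : Type*} [Field F]

lemma mulVec_ne_zero (g : GL (Fin 2) F) {w : Fin 2 → F} (hw : w ≠ 0) :
    (g : Matrix (Fin 2) (Fin 2) F) *ᵥ w ≠ 0 := by
  intro h
  apply hw
  apply glInj F g
  simpa [Matrix.mulVecLin_apply] using h

lemma smul_mk (g : GL (Fin 2) F) (w : Fin 2 → F) (hw : w ≠ 0) :
    g • Projectivization.mk F w hw
      = Projectivization.mk F ((g : Matrix (Fin 2) (Fin 2) F) *ᵥ w) (mulVec_ne_zero g hw) := by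
  show Projectivization.map _ (glInj F g) _ = _
  rw [Projectivization.map_mk, Projectivization.mk_eq_mk_iff]
  exact ⟨1, by simp [Matrix.mulVecLin_apply]⟩

lemma toPGL_smul (g : GL (Fin 2) F) (x : ℙ F (Fin 2 → F)) : toPGL F g x = g • x := rfl

lemma toPGL_eq_one (g : GL (Fin 2) F) (a : F)
    (h : (g : Matrix (Fin 2) (Fin 2) F) = a • 1) : toPGL F g = 1 := by
  have hd : IsUnit ((g : Matrix (Fin 2) (Fin 2) F).det) :=
    (Units.isUnit g).map Matrix.detMonoidHom
  have ha : a ≠ 0 := by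
    rintro rfl
    rw [h, zero_smul] at hd
    simp at hd
  ext x
  induction x using Projectivization.ind with
  | h w hw =>
    rw [Equiv.Perm.one_apply, toPGL_smul, smul_mk, Projectivization.mk_eq_mk_iff]
    refine ⟨Units.mk0 a ha, ?_⟩
    rw [h]
    simp [Units.smul_def, Matrix.smul_mulVec]

lemma exists_scalar_of_toPGL_eq_one (u : GL (Fin 2) F) (h : toPGL F u = 1) :
    ∃ a : F, (u : Matrix (Fin 2) (Fin 2) F) = a • 1 := by
  set M := (u : Matrix (Fin 2) (Fin 2) F) with hM
  have key : ∀ (w : Fin 2 → F) (hw : w ≠ 0), ∃ a : Fˣ, (a : F) • w = M *ᵥ w := by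
    intro w hw
    have h1 : toPGL F u (Projectivization.mk F w hw) = Projectivization.mk F w hw := by
      rw [h]; rfl
    rw [toPGL_smul, smul_mk, Projectivization.mk_eq_mk_iff] at h1
    obtain ⟨a, ha⟩ := h1
    exact ⟨a, by rw [Units.smul_def] at ha; exact ha⟩
  have hne0 : (![1, 0] : Fin 2 → F) ≠ 0 := by
    intro hcon; have := congrFun hcon 0; simp at this
  have hne1 : (![0, 1] : Fin 2 → F) ≠ 0 := by
    intro hcon; have := congrFun hcon 1; simp at this
  have hne2 : (![1, 1] : Fin 2 → F) ≠ 0 := by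
    intro hcon; have := congrFun hcon 0; simp at this
  obtain ⟨a0, ha0⟩ := key ![1, 0] hne0
  obtain ⟨a1, ha1⟩ := key ![0, 1] hne1
  obtain ⟨b, hb⟩ := key ![1, 1] hne2
  have e00 := congrFun ha0 0
  have e01 := congrFun ha0 1
  have e10 := congrFun ha1 0
  have e11 := congrFun ha1 1
  have e20 := congrFun hb 0
  have e21 := congrFun hb 1
  simp [Matrix.mulVec, dotProduct, Fin.sum_univ_two] at e00 e01 e10 e11 e20 e21
  refine ⟨(b : F), ?_⟩
  ext i j
  fin_cases i <;> fin_cases j <;> simp only [Matrix.smul_apply, Matrix.one_apply] <;> simp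
  · linear_combination -e20 + e10
  · linear_combination -e10
  · linear_combination -e01
  · linear_combination -e21 + e01

lemma vec_cases {w : Fin 2 → F} (hw : w ≠ 0) : w 0 ≠ 0 ∨ w 1 ≠ 0 := by
  by_contra hc
  push_neg at hc
  exact hw (funext fun i => by fin_cases i <;> simp [hc.1, hc.2])

lemma det_eq_zero_of_mulVec_eq_zero {A : Matrix (Fin 2) (Fin 2) F} {w : Fin 2 → F}
    (hw : w ≠ 0) (h : A *ᵥ w = 0) : A.det = 0 := by
  have h0 := congrFun h 0
  have h1 := congrFun h 1
  simp [Matrix.mulVec, dotProduct, Fin.sum_univ_two] at h0 h1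
  rw [Matrix.det_fin_two]
  rcases vec_cases hw with h' | h'
  · have : (A 0 0 * A 1 1 - A 0 1 * A 1 0) * w 0 = 0 := by
      linear_combination A 1 1 * h0 - A 0 1 * h1
    exact (mul_eq_zero.mp this).resolve_right h'
  · have : (A 0 0 * A 1 1 - A 0 1 * A 1 0) * w 1 = 0 := by
      linear_combination A 0 0 * h1 - A 1 0 * h0
    exact (mul_eq_zero.mp this).resolve_right h'

lemma sq_eq_zero_of_eig {M : Matrix (Fin 2) (Fin 2) F} {cc : F} {w : Fin 2 → F} (hw : w ≠ 0)
    (hdet : M.det = cc * cc) (heig : M *ᵥ w = cc • w) (hcc : cc ≠ 0) :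
    (M - cc • 1) *ᵥ w = 0 ∧ (M - cc • 1) * (M - cc • 1) = 0 := by
  have hAv : (M - cc • 1) *ᵥ w = 0 := by
    rw [Matrix.sub_mulVec, Matrix.smul_mulVec, Matrix.one_mulVec, heig, sub_self]
  refine ⟨hAv, ?_⟩
  have hdetA : (M - cc • 1).det = 0 := det_eq_zero_of_mulVec_eq_zero hw hAv
  have hA00 : (M - cc • 1) 0 0 = M 0 0 - cc := by simp [Matrix.sub_apply, Matrix.one_apply]
  have hA01 : (M - cc • 1) 0 1 = M 0 1 := by simp [Matrix.sub_apply, Matrix.one_apply]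
  have hA10 : (M - cc • 1) 1 0 = M 1 0 := by simp [Matrix.sub_apply, Matrix.one_apply]
  have hA11 : (M - cc • 1) 1 1 = M 1 1 - cc := by simp [Matrix.sub_apply, Matrix.one_apply]
  rw [Matrix.det_fin_two, hA00, hA01, hA10, hA11] at hdetA
  rw [Matrix.det_fin_two] at hdet
  have htr : M 0 0 + M 1 1 = 2 * cc := by
    apply mul_left_cancel₀ hcc
    linear_combination hdet - hdetA
  ext i j
  fin_cases i <;> fin_cases j <;>
    simp only [Matrix.mul_apply, Fin.sum_univ_two, Matrix.zero_apply, Fin.zero_eta, Fin.mk_one,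
      hA00, hA01, hA10, hA11]
  · linear_combination (M 0 0 - cc) * htr - hdetA
  · linear_combination M 0 1 * htr
  · linear_combination M 1 0 * htr
  · linear_combination (M 1 1 - cc) * htr - hdetA

lemma exists_smul_nilpotent {w : Fin 2 → F} (hw : w ≠ 0) {A : Matrix (Fin 2) (Fin 2) F}
    (hA2 : A * A = 0) (hAv : A *ᵥ w = 0) :
    ∃ s : F, A = s • !![-(w 0 * w 1), w 0 * w 0; -(w 1 * w 1), w 0 * w 1] := by
  have r0 := congrFun hAv 0
  have r1 := congrFun hAv 1
  simp [Matrix.mulVec, dotProduct, Fin.sum_univ_two] at r0 r1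
  have m00 := congrFun (congrFun hA2 0) 0
  have m01 := congrFun (congrFun hA2 0) 1
  have m10 := congrFun (congrFun hA2 1) 0
  have m11 := congrFun (congrFun hA2 1) 1
  simp [Matrix.mul_apply, Fin.sum_univ_two] at m00 m01 m10 m11
  rcases vec_cases hw with h' | h'
  · have hy : (w 0 * A 1 1 - w 1 * A 0 1) * (w 0 * A 1 1 - w 1 * A 0 1) = 0 := by
      linear_combination (w 0 * w 0) * m11 - A 0 1 * w 0 * r1 - w 0 * w 1 * m01 + A 0 1 * w 1 * r0
    have hy0 : w 0 * A 1 1 - w 1 * A 0 1 = 0 := by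
      rcases mul_eq_zero.mp hy with h | h <;> exact h
    refine ⟨A 0 1 / (w 0 * w 0), ?_⟩
    ext i j
    fin_cases i <;> fin_cases j <;>
      simp only [Matrix.smul_apply, Fin.zero_eta, Fin.mk_one, Matrix.cons_val', Matrix.cons_val_zero,
        Matrix.cons_val_one, Matrix.head_cons, Matrix.head_fin_const, Matrix.of_apply,
        Matrix.cons_val_fin_one, smul_eq_mul] <;> field_simp
    · linear_combination r0
    · linear_combination w 0 * r1 - w 1 * hy0
    · linear_combination hy0
  · have hy : (w 1 * A 0 0 - w 0 * A 1 0) * (w 1 * A 0 0 - w 0 * A 1 0) = 0 := by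
      linear_combination (w 1 * w 1) * m00 - A 1 0 * w 1 * r0 - w 0 * w 1 * m10 + A 1 0 * w 0 * r1
    have hy0 : w 1 * A 0 0 - w 0 * A 1 0 = 0 := by
      rcases mul_eq_zero.mp hy with h | h <;> exact h
    refine ⟨-(A 1 0) / (w 1 * w 1), ?_⟩
    ext i j
    fin_cases i <;> fin_cases j <;>
      simp only [Matrix.smul_apply, Fin.zero_eta, Fin.mk_one, Matrix.cons_val', Matrix.cons_val_zero,
        Matrix.cons_val_one, Matrix.head_cons, Matrix.head_fin_const, Matrix.of_apply,
        Matrix.cons_val_fin_one, smul_eq_mul] <;> field_simp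
    · linear_combination hy0
    · linear_combination w 1 * r0 - w 0 * hy0
    · linear_combination r1

lemma scalar_add_nilpotent_pow {p : ℕ} (hp : p.Prime) [CharP F p] (cc : F)
    (A : Matrix (Fin 2) (Fin 2) F) (hA2 : A * A = 0) :
    (cc • (1 : Matrix (Fin 2) (Fin 2) F) + A) ^ p = (cc ^ p) • 1 := by
  haveI := Fact.mk hp
  have hApow : ∀ m : ℕ, 2 ≤ m → A ^ m = 0 := by
    intro m hm
    obtain ⟨q, rfl⟩ := Nat.exists_eq_add_of_le hm
    rw [pow_add, pow_two, hA2, zero_mul]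
  have hcomm : Commute (cc • (1 : Matrix (Fin 2) (Fin 2) F)) A := by
    show _ * _ = _ * _
    rw [Matrix.smul_mul, Matrix.mul_smul, one_mul, mul_one]
  rw [hcomm.add_pow]
  rw [Finset.sum_eq_single p]
  · simp [_root_.smul_pow]
  · intro k hk hkp
    rcases Nat.lt_or_ge k p with hlt | hge
    · rcases Nat.lt_or_ge k (p - 1) with hlt' | hge'
      · have : 2 ≤ p - k := by omega
        rw [hApow _ this, mul_zero, zero_mul]
      · have hk1 : k = p - 1 := by omega
        have : p - k = 1 := by omega
        rw [this, hk1, pow_one]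
        have hch : (p.choose (p - 1) : Matrix (Fin 2) (Fin 2) F) = 0 := by
          rw [Nat.choose_symm hp.one_le, Nat.choose_one_right]
          exact CharP.cast_eq_zero _ p
        rw [hch, mul_zero]
    · exfalso
      rw [Finset.mem_range] at hk
      omega
  · intro hnp
    exfalso
    exact hnp (Finset.mem_range.mpr (Nat.lt_succ_self p))

lemma phi_indep {w : Fin 2 → F} (hw : w ≠ 0) (a b : GL (Fin 2) F)
    (hab : toPGL F a = toPGL F b) (ca cb : Fˣ)
    (hca : (a : Matrix (Fin 2) (Fin 2) F) *ᵥ w = (ca : F) • w)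
    (hcb : (b : Matrix (Fin 2) (Fin 2) F) *ᵥ w = (cb : F) • w) :
    ca ^ 2 * (Matrix.GeneralLinearGroup.det a)⁻¹
      = cb ^ 2 * (Matrix.GeneralLinearGroup.det b)⁻¹ := by
  obtain ⟨t, ht⟩ := exists_scalar_of_toPGL_eq_one (b * a⁻¹)
    (by rw [_root_.map_mul, _root_.map_inv, hab, mul_inv_cancel])
  have hb_eq : (b : Matrix (Fin 2) (Fin 2) F) = t • (a : Matrix (Fin 2) (Fin 2) F) := by
    have h1 : ((b * a⁻¹ * a : GL (Fin 2) F) : Matrix (Fin 2) (Fin 2) F)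
        = (t • (1 : Matrix (Fin 2) (Fin 2) F)) * (a : Matrix (Fin 2) (Fin 2) F) := by
      rw [Matrix.GeneralLinearGroup.coe_mul, ht]
    rw [inv_mul_cancel_right] at h1
    rw [h1, Matrix.smul_mul, one_mul]
  have ht0 : t ≠ 0 := by
    rintro rfl
    have hd : IsUnit ((b : Matrix (Fin 2) (Fin 2) F).det) :=
      (Units.isUnit b).map Matrix.detMonoidHom
    rw [hb_eq, zero_smul] at hd
    simp at hd
  have h1 : (cb : F) • w = (t * (ca : F)) • w := by
    rw [← hcb, hb_eq, Matrix.smul_mulVec, hca, smul_smul]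
  have h2 : (cb : F) = t * (ca : F) := by
    obtain ⟨i, hi⟩ := Function.ne_iff.mp hw
    have := congrFun h1 i
    simp only [Pi.smul_apply, smul_eq_mul] at this
    exact mul_right_cancel₀ hi this
  have h3 : (b : Matrix (Fin 2) (Fin 2) F).det = t ^ 2 * (a : Matrix (Fin 2) (Fin 2) F).det := by
    rw [hb_eq, Matrix.det_smul]
    simp
  have hda : ((Matrix.GeneralLinearGroup.det a : Fˣ) : F) ≠ 0 := Units.ne_zero _
  apply Units.ext
  push_cast
  have hdav : ((Matrix.GeneralLinearGroup.det a : Fˣ) : F) = (a : Matrix (Fin 2) (Fin 2) F).det := rfl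
  have hdbv : ((Matrix.GeneralLinearGroup.det b : Fˣ) : F) = (b : Matrix (Fin 2) (Fin 2) F).det := rfl
  rw [hdav, hdbv, h3, h2]
  field_simp

end Aux

/-- A finite subgroup of `PGL(2,F)` fixing a point of `ℙ¹(F)`, with `p = char F` dividing its
order, has a normal elementary abelian `p`-subgroup with cyclic quotient of order coprime
to `p`. -/
theorem stmt2 (F : Type*) [Field F] (p : ℕ) (hp : p.Prime) [CharP F p]
    (G : Subgroup (Equiv.Perm (ℙ F (Fin 2 → F)))) (hG : G ≤ pgl F) (hfin : Finite G)
    (hfix : ∃ z : ℙ F (Fin 2 → F), ∀ σ ∈ G, σ z = z)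
    (hdvd : p ∣ Nat.card G) :
    ∃ N : Subgroup G, ∃ hN : N.Normal, (∀ a ∈ N, ∀ b ∈ N, a * b = b * a) ∧
      (∀ a ∈ N, a ^ p = 1) ∧
      (letI : N.Normal := hN
       IsCyclic (G ⧸ N) ∧ Nat.Coprime (Nat.card (G ⧸ N)) p) := by
  classical
  haveI := hfin
  haveI := Fact.mk hp
  obtain ⟨z, hz⟩ := hfix
  have hv : z.rep ≠ 0 := z.rep_nonzero
  set v : Fin 2 → F := z.rep with hvdef
  have hzmk : Projectivization.mk F v hv = z := z.mk_rep
  have hrep : ∀ σ : G, ∃ g : GL (Fin 2) F, toPGL F g = (σ : Equiv.Perm (ℙ F (Fin 2 → F))) :=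
    fun σ => hG σ.2
  choose g hg using hrep
  have heig : ∀ σ : G, ∃ c : Fˣ, (g σ : Matrix (Fin 2) (Fin 2) F) *ᵥ v = (c : F) • v := by
    intro σ
    have h2 : toPGL F (g σ) (Projectivization.mk F v hv) = Projectivization.mk F v hv := by
      rw [hg σ, hzmk]
      exact hz σ σ.2
    rw [toPGL_smul, smul_mk, Projectivization.mk_eq_mk_iff] at h2
    obtain ⟨cc, hcc⟩ := h2
    exact ⟨cc, by rw [Units.smul_def] at hcc; exact hcc.symm⟩
  choose c hc using heig
  let φ : G →* Fˣ := MonoidHom.mk' (fun σ => c σ ^ 2 * (Matrix.GeneralLinearGroup.det (g σ))⁻¹)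
    (by
      intro σ τ
      have h1 : toPGL F (g (σ * τ)) = toPGL F (g σ * g τ) := by
        rw [_root_.map_mul, hg, hg, hg]
        rfl
      have h2 : ((g σ * g τ : GL (Fin 2) F) : Matrix (Fin 2) (Fin 2) F) *ᵥ v
          = ((c σ * c τ : Fˣ) : F) • v := by
        rw [Matrix.GeneralLinearGroup.coe_mul, ← Matrix.mulVec_mulVec, hc τ,
          Matrix.mulVec_smul, hc σ, smul_smul, Units.val_mul, mul_comm]
      have h3 := phi_indep hv (g (σ * τ)) (g σ * g τ) h1 (c (σ * τ)) (c σ * c τ)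
        (hc (σ * τ)) h2
      rw [h3, _root_.map_mul, mul_pow, mul_inv]
      exact mul_mul_mul_comm _ _ _ _)
  have hker : ∀ σ : G, σ ∈ φ.ker → ((c σ : F)) ^ 2 = (g σ : Matrix (Fin 2) (Fin 2) F).det := by
    intro σ hσ
    have h1 : c σ ^ 2 * (Matrix.GeneralLinearGroup.det (g σ))⁻¹ = 1 := hσ
    have h2 : c σ ^ 2 = Matrix.GeneralLinearGroup.det (g σ) := by rwa [mul_inv_eq_one] at h1
    have h3 := congrArg (Units.val) h2
    push_cast at h3
    exact h3
  have hnil : ∀ σ : G, σ ∈ φ.ker →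
      ((g σ : Matrix (Fin 2) (Fin 2) F) - (c σ : F) • 1) *ᵥ v = 0 ∧
      ((g σ : Matrix (Fin 2) (Fin 2) F) - (c σ : F) • 1) *
        ((g σ : Matrix (Fin 2) (Fin 2) F) - (c σ : F) • 1) = 0 := by
    intro σ hσ
    exact sq_eq_zero_of_eig hv (by rw [← hker σ hσ]; ring) (hc σ) (Units.ne_zero (c σ))
  refine ⟨φ.ker, MonoidHom.normal_ker φ, ?_, ?_, ?_, ?_⟩
  · -- commutativity
    intro a ha b hb
    obtain ⟨hav, ha2⟩ := hnil a ha
    obtain ⟨hbv, hb2⟩ := hnil b hb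
    obtain ⟨s, hs⟩ := exists_smul_nilpotent hv ha2 hav
    obtain ⟨s', hs'⟩ := exists_smul_nilpotent hv hb2 hbv
    set Nm : Matrix (Fin 2) (Fin 2) F := !![-(v 0 * v 1), v 0 * v 0; -(v 1 * v 1), v 0 * v 1]
      with hNm
    have hga : (g a : Matrix (Fin 2) (Fin 2) F) = s • Nm + (c a : F) • 1 :=
      sub_eq_iff_eq_add.mp hs
    have hgb : (g b : Matrix (Fin 2) (Fin 2) F) = s' • Nm + (c b : F) • 1 :=
      sub_eq_iff_eq_add.mp hs'
    have hcomm : Commute (g a : Matrix (Fin 2) (Fin 2) F) (g b : Matrix (Fin 2) (Fin 2) F) := by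
      rw [hga, hgb]
      exact Commute.add_left
        (Commute.add_right (((Commute.refl Nm).smul_left s).smul_right s')
          (((Commute.one_right _).smul_right _)))
        (Commute.add_right (((Commute.one_left _).smul_left _))
          (((Commute.one_left _).smul_left _).smul_right _))
    have hGL : g a * g b = g b * g a := by
      apply Units.ext
      rw [Matrix.GeneralLinearGroup.coe_mul, Matrix.GeneralLinearGroup.coe_mul]
      exact hcomm
    apply Subtype.ext
    have h1 : ((a * b : G) : Equiv.Perm (ℙ F (Fin 2 → F)))
        = toPGL F (g a * g b) := by rw [_root_.map_mul, hg, hg]; rfl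
    have h2 : ((b * a : G) : Equiv.Perm (ℙ F (Fin 2 → F)))
        = toPGL F (g b * g a) := by rw [_root_.map_mul, hg, hg]; rfl
    rw [h1, h2, hGL]
  · -- exponent p
    intro a ha
    obtain ⟨hav, ha2⟩ := hnil a ha
    have hM : (g a : Matrix (Fin 2) (Fin 2) F)
        = (c a : F) • 1 + ((g a : Matrix (Fin 2) (Fin 2) F) - (c a : F) • 1) := by abel
    have hpow : (g a : Matrix (Fin 2) (Fin 2) F) ^ p = ((c a : F) ^ p) • 1 := by
      conv_lhs => rw [hM]
      exact scalar_add_nilpotent_pow hp _ _ ha2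
    have h1 : toPGL F ((g a) ^ p) = 1 := by
      apply toPGL_eq_one _ ((c a : F) ^ p)
      rw [Units.val_pow_eq_pow_val]
      exact hpow
    apply Subtype.ext
    have h2 : ((a ^ p : G) : Equiv.Perm (ℙ F (Fin 2 → F)))
        = toPGL F ((g a) ^ p) := by rw [_root_.map_pow, hg]; rfl
    rw [h2, h1]
    rfl
  · -- cyclic
    haveI : Finite φ.range := Finite.of_equiv _ (QuotientGroup.quotientKerEquivRange φ).toEquiv
    exact isCyclic_of_surjective (QuotientGroup.quotientKerEquivRange φ).symm
      (QuotientGroup.quotientKerEquivRange φ).symm.surjective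
  · -- coprime
    rw [Nat.coprime_comm]
    rw [hp.coprime_iff_not_dvd]
    intro hdvd'
    obtain ⟨x, hx⟩ := exists_prime_orderOf_dvd_card' p hdvd'
    have hx1 : x ≠ 1 := by
      intro h
      rw [h, orderOf_one] at hx
      exact hp.one_lt.ne' hx.symm
    have hxp : x ^ p = 1 := by rw [← hx]; exact pow_orderOf_eq_one x
    set e := QuotientGroup.quotientKerEquivRange φ with he
    have hexp : (e x) ^ p = 1 := by rw [← _root_.map_pow, hxp, _root_.map_one]
    have hyF : (((e x : φ.range) : Fˣ) : F) ^ p = 1 := by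
      have := congrArg (fun u : φ.range => ((u : Fˣ) : F)) hexp
      push_cast at this
      exact this
    have hy1 : (((e x : φ.range) : Fˣ) : F) = 1 := by
      apply frobenius_inj F p
      rw [frobenius_def, frobenius_def, hyF, one_pow]
    have : e x = 1 := by
      apply Subtype.ext
      apply Units.ext
      exact hy1
    exact hx1 (by rw [← _root_.map_one e.symm, ← this, MulEquiv.symm_apply_apply])

end PaperPGL
end

section
/- A finite subgroup G of PGL(2,F), F algebraically closed, has at most three non-regular orbits in its action on P^1(F). -/
open Matrix Polynomial
open scoped LinearAlgebra.Projectivization MatrixGroups Pointwise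

namespace PaperPGL

section Aux
variable {F : Type*} [Field F]

lemma eq_one_of_three_fixed (σ : Equiv.Perm (ℙ F (Fin 2 → F))) (hσ : σ ∈ pgl F)
    {a b c : ℙ F (Fin 2 → F)} (hab : a ≠ b) (hac : a ≠ c) (hbc : b ≠ c)
    (ha : σ a = a) (hb : σ b = b) (hc : σ c = c) : σ = 1 := by
  obtain ⟨g, hg⟩ := hσ
  set A : (Fin 2 → F) →ₗ[F] (Fin 2 → F) := ((g : Matrix (Fin 2) (Fin 2) F)).mulVecLin with hA
  have hsmul : ∀ x : ℙ F (Fin 2 → F), σ x = Projectivization.map A (glInj F g) x := by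
    intro x; rw [← hg]; rfl
  have eigen : ∀ x : ℙ F (Fin 2 → F), σ x = x → ∃ u : Fˣ, A x.rep = (u : F) • x.rep := by
    intro x hx
    have h1 : Projectivization.map A (glInj F g) (Projectivization.mk F x.rep x.rep_nonzero)
        = Projectivization.mk F x.rep x.rep_nonzero := by
      rw [Projectivization.mk_rep, ← hsmul, hx]
    rw [Projectivization.map_mk, Projectivization.mk_eq_mk_iff] at h1
    obtain ⟨u, hu⟩ := h1
    exact ⟨u, by rw [← hu]; rfl⟩
  obtain ⟨ca, hca⟩ := eigen a ha
  obtain ⟨cb, hcb⟩ := eigen b hb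
  obtain ⟨cc, hcc⟩ := eigen c hc
  have hvw : LinearIndependent F ![a.rep, b.rep] := by
    rw [LinearIndependent.pair_iff' a.rep_nonzero]
    intro t ht
    refine hab ?_
    have hba : b = a := by
      rw [← a.mk_rep, ← b.mk_rep, Projectivization.mk_eq_mk_iff']
      exact ⟨t, ht⟩
    exact hba.symm
  have hspan : Submodule.span F ({a.rep, b.rep} : Set (Fin 2 → F)) = ⊤ := by
    have h2 := hvw.span_eq_top_of_card_eq_finrank (by simp)
    have hr : Set.range ![a.rep, b.rep] = {a.rep, b.rep} := by
      simp only [Matrix.range_cons, Matrix.range_empty, Set.union_empty, Set.union_singleton]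
      exact Set.pair_comm _ _
    rwa [hr] at h2
  obtain ⟨p, q, hpq⟩ : ∃ p q : F, p • a.rep + q • b.rep = c.rep :=
    Submodule.mem_span_pair.mp (hspan ▸ Submodule.mem_top)
  have hp : p ≠ 0 := by
    intro h0
    refine hbc (Eq.symm ?_)
    rw [← b.mk_rep, ← c.mk_rep, Projectivization.mk_eq_mk_iff']
    exact ⟨q, by rw [← hpq, h0, zero_smul, zero_add]⟩
  have hq : q ≠ 0 := by
    intro h0
    refine hac (Eq.symm ?_)
    rw [← a.mk_rep, ← c.mk_rep, Projectivization.mk_eq_mk_iff']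
    exact ⟨p, by rw [← hpq, h0, zero_smul, add_zero]⟩
  have key : (p * ca - p * cc) • a.rep + (q * cb - q * cc) • b.rep = 0 := by
    have h1 : A (p • a.rep + q • b.rep) = p • A a.rep + q • A b.rep := by
      rw [map_add, A.map_smul, A.map_smul]
    rw [hpq, hcc, hca, hcb, ← hpq] at h1
    have := h1.symm
    rw [smul_add, smul_smul, smul_smul, smul_smul, smul_smul] at this
    have h3 : (p * ca) • a.rep + (q * cb) • b.rep
        = (p * cc) • a.rep + (q * (cc : F)) • b.rep := by
      rw [mul_comm (cc : F) p, mul_comm (cc : F) q] at this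
      exact this
    calc (p * ca - p * cc) • a.rep + (q * cb - q * cc) • b.rep
        = ((p * ca) • a.rep + (q * cb) • b.rep)
          - ((p * cc) • a.rep + (q * (cc : F)) • b.rep) := by
          rw [sub_smul, sub_smul]; abel
      _ = 0 := by rw [h3, sub_self]
  obtain ⟨e1, e2⟩ := LinearIndependent.pair_iff.mp hvw _ _ key
  have hcacc : (ca : F) = cc := by
    have := sub_eq_zero.mp e1
    exact mul_left_cancel₀ hp this
  have hcbcc : (cb : F) = cc := by
    have := sub_eq_zero.mp e2
    exact mul_left_cancel₀ hq this
  have hAx : ∀ x : Fin 2 → F, A x = (cc : F) • x := by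
    have hAeq : A = (cc : F) • (LinearMap.id : (Fin 2 → F) →ₗ[F] (Fin 2 → F)) := by
      apply LinearMap.ext_on hspan
      rintro x (rfl | rfl)
      · simp [hca, hcacc]
      · simp [hcb, hcbcc]
    intro x; rw [hAeq]; rfl
  ext x
  show σ x = x
  rw [hsmul, ← x.mk_rep, Projectivization.map_mk, Projectivization.mk_eq_mk_iff]
  exact ⟨cc, by rw [hAx]; rfl⟩

lemma card_fixed_le_two (σ : Equiv.Perm (ℙ F (Fin 2 → F))) (hσ : σ ∈ pgl F) (hne : σ ≠ 1)
    (s : Finset (ℙ F (Fin 2 → F))) (hs : ∀ x ∈ s, σ x = x) : s.card ≤ 2 := by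
  by_contra h
  push_neg at h
  obtain ⟨x, y, z, hx, hy, hz, hxy, hxz, hyz⟩ := Finset.two_lt_card_iff.mp h
  exact hne (eq_one_of_three_fixed σ hσ hxy hxz hyz (hs x hx) (hs y hy) (hs z hz))

open Finset in
lemma aux_orbit (G : Subgroup (Equiv.Perm (ℙ F (Fin 2 → F)))) [Fintype G]
    (z : ℙ F (Fin 2 → F)) (hz : MulAction.stabilizer G z ≠ ⊥)
    (O : Finset (ℙ F (Fin 2 → F))) (hO : ∀ y, y ∈ O ↔ y ∈ MulAction.orbit G z)
    (st : ℙ F (Fin 2 → F) → ℕ)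
    (hst : ∀ y, st y = Nat.card (MulAction.stabilizer G y)) :
    Fintype.card G ≤ 2 * ∑ y ∈ O, (st y - 1) := by
  classical
  set n := Fintype.card G with hn
  have hos : ∀ y : ℙ F (Fin 2 → F),
      Nat.card (MulAction.orbit G y) * Nat.card (MulAction.stabilizer G y) = n := by
    intro y
    rw [← Nat.card_prod, hn, ← Nat.card_eq_fintype_card]
    exact Nat.card_congr (MulAction.orbitProdStabilizerEquivGroup G y)
  set k := O.card with hkdef
  have hOset : (MulAction.orbit G z : Set (ℙ F (Fin 2 → F))) = ↑O := by
    ext y; simp [hO]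
  have hk : Nat.card (MulAction.orbit G z) = k := by
    rw [Nat.card_coe_set_eq, hOset, Set.ncard_coe_finset]
  have hkpos : 0 < k := Finset.card_pos.mpr ⟨z, (hO z).mpr (MulAction.mem_orbit_self z)⟩
  set s := Nat.card (MulAction.stabilizer G z) with hsdef
  have hs2 : 2 ≤ s := (Subgroup.one_lt_card_iff_ne_bot _).mpr hz
  have hsame : ∀ y ∈ O, st y = s := by
    intro y hy
    have horb : MulAction.orbit G y = MulAction.orbit G z :=
      MulAction.orbit_eq_iff.mpr ((hO y).mp hy)
    have h1 := hos y
    rw [horb, hk] at h1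
    have h2 := hos z
    rw [hk] at h2
    rw [hst y]
    exact Nat.eq_of_mul_eq_mul_left hkpos (h1.trans h2.symm)
  have hsum : ∑ y ∈ O, (st y - 1) = k * (s - 1) := by
    rw [Finset.sum_congr rfl (fun y hy => by rw [hsame y hy]), Finset.sum_const, smul_eq_mul]
  rw [hsum]
  have hks : k * (s - 1) = k * s - k := by rw [Nat.mul_sub, mul_one]
  have hkle : k * 1 ≤ k * s := Nat.mul_le_mul_left k (by omega)
  rw [mul_one] at hkle
  have hn2 : k * s = n := by rw [← hk]; exact hos z
  have h2k : k * 2 ≤ k * s := Nat.mul_le_mul_left k hs2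
  omega

end Aux

/-- A finite subgroup of `PGL(2,F)`, `F` algebraically closed, has at most three non-regular
orbits on `ℙ¹(F)` (an orbit is non-regular iff the stabilizer of a point in it is
nontrivial). -/
theorem stmt3 (F : Type*) [Field F] [IsAlgClosed F]
    (G : Subgroup (Equiv.Perm (ℙ F (Fin 2 → F)))) (hG : G ≤ pgl F) (hfin : Finite G) :
    ∃ z₁ z₂ z₃ : ℙ F (Fin 2 → F), ∀ z : ℙ F (Fin 2 → F),
      MulAction.stabilizer G z ≠ ⊥ →
      MulAction.orbit G z = MulAction.orbit G z₁ ∨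
      MulAction.orbit G z = MulAction.orbit G z₂ ∨
      MulAction.orbit G z = MulAction.orbit G z₃ := by
  classical
  by_contra hcon
  push_neg at hcon
  obtain ⟨p0⟩ : Nonempty (ℙ F (Fin 2 → F)) :=
    ⟨Projectivization.mk F (fun _ => 1) (fun h => by simpa using congrFun h 0)⟩
  obtain ⟨x1, hs1, -, -, -⟩ := hcon p0 p0 p0
  obtain ⟨x2, hs2, h21, -, -⟩ := hcon x1 x1 x1
  obtain ⟨x3, hs3, h31, h32, -⟩ := hcon x1 x2 x2
  obtain ⟨x4, hs4, h41, h42, h43⟩ := hcon x1 x2 x3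
  haveI : Fintype G := Fintype.ofFinite G
  set n := Fintype.card G with hn
  set st : ℙ F (Fin 2 → F) → ℕ :=
    fun y => (Finset.univ.filter fun g : G => g • y = y).card with hstdef
  have hst : ∀ y, st y = Nat.card (MulAction.stabilizer G y) := by
    intro y
    show (Finset.univ.filter fun g : G => g • y = y).card = _
    rw [Nat.card_eq_fintype_card, Fintype.card_subtype]
    congr 1
  have hofin : ∀ z : ℙ F (Fin 2 → F), (MulAction.orbit G z).Finite :=
    fun z => Set.finite_range _
  have hmem : ∀ (z y : ℙ F (Fin 2 → F)),
      y ∈ (hofin z).toFinset ↔ y ∈ MulAction.orbit G z :=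
    fun z y => Set.Finite.mem_toFinset _
  set O1 := (hofin x1).toFinset with hO1
  set O2 := (hofin x2).toFinset with hO2
  set O3 := (hofin x3).toFinset with hO3
  set O4 := (hofin x4).toFinset with hO4
  have hb1 : n ≤ 2 * ∑ y ∈ O1, (st y - 1) := aux_orbit G x1 hs1 O1 (hmem x1) st hst
  have hb2 : n ≤ 2 * ∑ y ∈ O2, (st y - 1) := aux_orbit G x2 hs2 O2 (hmem x2) st hst
  have hb3 : n ≤ 2 * ∑ y ∈ O3, (st y - 1) := aux_orbit G x3 hs3 O3 (hmem x3) st hst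
  have hb4 : n ≤ 2 * ∑ y ∈ O4, (st y - 1) := aux_orbit G x4 hs4 O4 (hmem x4) st hst
  have hdisj : ∀ a b : ℙ F (Fin 2 → F), MulAction.orbit G a ≠ MulAction.orbit G b →
      Disjoint ((hofin a).toFinset) ((hofin b).toFinset) := by
    intro a b hab
    rw [Finset.disjoint_left]
    intro y hya hyb
    rw [hmem] at hya hyb
    exact hab ((MulAction.orbit_eq_iff.mpr hya).symm.trans (MulAction.orbit_eq_iff.mpr hyb))
  have d12 : Disjoint O1 O2 := hdisj x1 x2 (Ne.symm h21)
  have d13 : Disjoint O1 O3 := hdisj x1 x3 (Ne.symm h31)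
  have d23 : Disjoint O2 O3 := hdisj x2 x3 (Ne.symm h32)
  have d14 : Disjoint O1 O4 := hdisj x1 x4 (Ne.symm h41)
  have d24 : Disjoint O2 O4 := hdisj x2 x4 (Ne.symm h42)
  have d34 : Disjoint O3 O4 := hdisj x3 x4 (Ne.symm h43)
  set U := O1 ∪ O2 ∪ O3 ∪ O4 with hU
  have hsumU : ∑ y ∈ U, (st y - 1)
      = ∑ y ∈ O1, (st y - 1) + ∑ y ∈ O2, (st y - 1)
        + ∑ y ∈ O3, (st y - 1) + ∑ y ∈ O4, (st y - 1) := by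
    rw [hU, Finset.sum_union (by
        rw [Finset.disjoint_union_left, Finset.disjoint_union_left]
        exact ⟨⟨d14, d24⟩, d34⟩),
      Finset.sum_union (by rw [Finset.disjoint_union_left]; exact ⟨d13, d23⟩),
      Finset.sum_union d12]
  have hswap : ∑ g : G, (U.filter fun y => g • y = y ∧ g ≠ 1).card
      = ∑ y ∈ U, (Finset.univ.filter fun g : G => g • y = y ∧ g ≠ 1).card := by
    simp only [Finset.card_filter]
    exact Finset.sum_comm
  have hfix : ∀ y : ℙ F (Fin 2 → F),
      (Finset.univ.filter fun g : G => g • y = y ∧ g ≠ 1).card = st y - 1 := by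
    intro y
    have he : (Finset.univ.filter fun g : G => g • y = y ∧ g ≠ 1)
        = (Finset.univ.filter fun g : G => g • y = y).erase 1 := by
      ext g
      simp [Finset.mem_erase, and_comm]
    rw [he, Finset.card_erase_of_mem (by simp)]
  have hlower : ∑ g : G, (U.filter fun y => g • y = y ∧ g ≠ 1).card
      = ∑ y ∈ U, (st y - 1) := by
    rw [hswap]
    exact Finset.sum_congr rfl fun y _ => hfix y
  have hupper : ∑ g : G, (U.filter fun y => g • y = y ∧ g ≠ 1).card ≤ 2 * (n - 1) := by
    have hcard : ((Finset.univ : Finset G).erase 1).card = n - 1 := by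
      rw [Finset.card_erase_of_mem (Finset.mem_univ 1), Finset.card_univ]
    calc ∑ g : G, (U.filter fun y => g • y = y ∧ g ≠ 1).card
        = ∑ g ∈ (Finset.univ : Finset G).erase 1,
            (U.filter fun y => g • y = y ∧ g ≠ 1).card :=
          (Finset.sum_erase _ (by simp)).symm
      _ ≤ ∑ _g ∈ (Finset.univ : Finset G).erase 1, 2 := by
          refine Finset.sum_le_sum ?_
          intro g hg
          have hg1 : g ≠ 1 := (Finset.mem_erase.mp hg).1
          have hperm : (g : Equiv.Perm (ℙ F (Fin 2 → F))) ≠ 1 := by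
            intro h
            exact hg1 (OneMemClass.coe_eq_one.mp h)
          refine card_fixed_le_two _ (hG g.2) hperm _ ?_
          intro x hx
          exact (Finset.mem_filter.mp hx).2.1
      _ = 2 * (n - 1) := by
          rw [Finset.sum_const, hcard, smul_eq_mul, mul_comm]
  have hnpos : 0 < n := Fintype.card_pos
  omega

end PaperPGL
end

section
/- Let G be a finite subgroup of PGL(2, \bar{F}_q) with p dividing |G|. Then G has at most two non-regular orbits on P^1(\bar{F}_q), and G has exactly one non-regular orbit if and only if G is a p-group. -/
open Matrix Polynomial
open scoped LinearAlgebra.Projectivization MatrixGroups Pointwise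

namespace PaperPGL

section Core

variable {K : Type*} [Field K]

lemma mulVec_ne_zero_s6 (g : GL (Fin 2) K) {v : Fin 2 → K} (hv : v ≠ 0) :
    (g : Matrix (Fin 2) (Fin 2) K).mulVec v ≠ 0 := by
  intro h
  apply hv
  apply glInj K g
  simp only [Matrix.mulVecLin_apply, map_zero, h]

lemma toPGL_mk (g : GL (Fin 2) K) (v : Fin 2 → K) (hv : v ≠ 0) :
    toPGL K g (Projectivization.mk K v hv) =
      Projectivization.mk K ((g : Matrix (Fin 2) (Fin 2) K).mulVec v) (mulVec_ne_zero_s6 g hv) := by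
  have h0 : toPGL K g (Projectivization.mk K v hv) = g • (Projectivization.mk K v hv) := rfl
  rw [h0]
  show Projectivization.map ((g : Matrix (Fin 2) (Fin 2) K).mulVecLin) (glInj K g)
      (Projectivization.mk K v hv) = _
  rw [Projectivization.map_mk]
  rfl

lemma det_ne_zero (g : GL (Fin 2) K) : det (g : Matrix (Fin 2) (Fin 2) K) ≠ 0 := by
  have : IsUnit (g : Matrix (Fin 2) (Fin 2) K) := g.isUnit
  exact ((Matrix.isUnit_iff_isUnit_det _).mp this).ne_zero

lemma funext2 {f g : Fin 2 → K} (h0 : f 0 = g 0) (h1 : f 1 = g 1) : f = g := by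
  funext i
  fin_cases i
  · exact h0
  · exact h1

lemma ne_zero2 {f : Fin 2 → K} (h : f ≠ 0) : f 0 ≠ 0 ∨ f 1 ≠ 0 := by
  by_contra h'
  push_neg at h'
  exact h (funext2 (by simpa using h'.1) (by simpa using h'.2))

lemma smul_cancel_vec {v : Fin 2 → K} (hv : v ≠ 0) {s t : K} (h : s • v = t • v) : s = t := by
  by_contra hst
  have h2 : (s - t) • v = 0 := by rw [sub_smul, h, sub_self]
  rcases smul_eq_zero.mp h2 with h' | h'
  · exact hst (sub_eq_zero.mp h')
  · exact hv h'

lemma toPGL_eq_one_of_scalar (g : GL (Fin 2) K) (c : K) (hc : c ≠ 0)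
    (hg : (g : Matrix (Fin 2) (Fin 2) K) = c • 1) : toPGL K g = 1 := by
  ext x
  induction x using Projectivization.ind with
  | h v hv =>
    rw [toPGL_mk, Equiv.Perm.coe_one, id_eq]
    apply (Projectivization.mk_eq_mk_iff' K _ _ _ hv).mpr
    refine ⟨c, ?_⟩
    rw [hg, Matrix.smul_mulVec, Matrix.one_mulVec]

lemma pi_single_ne_zero (j : Fin 2) : (Pi.single j 1 : Fin 2 → K) ≠ 0 := by
  intro h
  have := congrFun h j
  simp [Pi.single_eq_same] at this

lemma col_ext {M : Matrix (Fin 2) (Fin 2) K} {a : K}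
    (h : ∀ j : Fin 2, M.mulVec (Pi.single j 1) = a • (Pi.single j 1 : Fin 2 → K)) :
    M = a • 1 := by
  ext i j
  have h2 := congrFun (h j) i
  rw [Matrix.mulVec_single] at h2
  simp only [Pi.smul_apply, MulOpposite.op_one, one_smul, Matrix.col_apply] at h2
  rw [h2]
  by_cases hij : i = j
  · subst hij; simp [Pi.single_eq_same, Matrix.one_apply]
  · simp [Pi.single_eq_of_ne hij, Matrix.one_apply, hij]

lemma scalar_of_toPGL_eq_one (g : GL (Fin 2) K) (h : toPGL K g = 1) :
    ∃ c : K, c ≠ 0 ∧ (g : Matrix (Fin 2) (Fin 2) K) = c • 1 := by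
  set M := (g : Matrix (Fin 2) (Fin 2) K) with hM
  have key : ∀ (v : Fin 2 → K) (hv : v ≠ 0), ∃ c : K, c • v = M.mulVec v := by
    intro v hv
    have h1 : toPGL K g (Projectivization.mk K v hv) = Projectivization.mk K v hv := by
      rw [h]; rfl
    rw [toPGL_mk] at h1
    exact (Projectivization.mk_eq_mk_iff' K _ _ _ hv).mp h1
  obtain ⟨a, ha⟩ := key (Pi.single 0 1) (pi_single_ne_zero 0)
  obtain ⟨b, hb⟩ := key (Pi.single 1 1) (pi_single_ne_zero 1)
  have hsum : (Pi.single 0 1 : Fin 2 → K) + Pi.single 1 1 ≠ 0 := by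
    intro h'
    have := congrFun h' 0
    simp [Pi.single_eq_same] at this
  obtain ⟨c, hc⟩ := key _ hsum
  rw [Matrix.mulVec_add, ← ha, ← hb] at hc
  have h0 := congrFun hc 0
  have h1 := congrFun hc 1
  simp [Pi.single_eq_same] at h0 h1
  have hane : a ≠ 0 := by
    intro h'
    apply mulVec_ne_zero_s6 g (pi_single_ne_zero (K := K) 0)
    rw [← ha, h', zero_smul]
  refine ⟨a, hane, col_ext ?_⟩
  intro j
  fin_cases j
  · exact ha.symm
  · rw [← h1, h0] at hb
    exact hb.symm

lemma exists_eigen [IsAlgClosed K] (g : GL (Fin 2) K) :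
    ∃ (v : Fin 2 → K) (a : K), v ≠ 0 ∧ (g : Matrix (Fin 2) (Fin 2) K).mulVec v = a • v := by
  obtain ⟨a, ha⟩ := Module.End.exists_eigenvalue ((g : Matrix (Fin 2) (Fin 2) K).mulVecLin)
  obtain ⟨v, hv⟩ := ha.exists_hasEigenvector
  refine ⟨v, a, hv.2, ?_⟩
  have := hv.apply_eq_smul
  simpa [Matrix.mulVecLin_apply] using this

lemma det_eq_mul (g : GL (Fin 2) K) {v : Fin 2 → K} (hv : v ≠ 0) {a : K}
    (hva : (g : Matrix (Fin 2) (Fin 2) K).mulVec v = a • v) :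
    det (g : Matrix (Fin 2) (Fin 2) K)
      = a * (trace (g : Matrix (Fin 2) (Fin 2) K) - a) := by
  set M := (g : Matrix (Fin 2) (Fin 2) K) with hM
  have h0 : (M - a • 1).mulVec v = 0 := by
    rw [Matrix.sub_mulVec, hva, Matrix.smul_mulVec, Matrix.one_mulVec, sub_self]
  have hdet : det (M - a • 1) = 0 := by
    rw [← Matrix.exists_mulVec_eq_zero_iff]
    exact ⟨v, hv, h0⟩
  rw [Matrix.det_fin_two] at hdet ⊢
  rw [Matrix.trace_fin_two]
  simp only [Matrix.sub_apply, Matrix.smul_apply, Matrix.one_apply, smul_eq_mul] at hdet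
  norm_num at hdet
  linear_combination hdet

lemma exists_second_eigen (g : GL (Fin 2) K) {v : Fin 2 → K} (hv : v ≠ 0) {a : K}
    (hva : (g : Matrix (Fin 2) (Fin 2) K).mulVec v = a • v) :
    ∃ w : Fin 2 → K, w ≠ 0 ∧ (g : Matrix (Fin 2) (Fin 2) K).mulVec w
      = (trace (g : Matrix (Fin 2) (Fin 2) K) - a) • w := by
  set M := (g : Matrix (Fin 2) (Fin 2) K) with hM
  have hdet := det_eq_mul g hv hva
  have hdet2 : det (M - (trace M - a) • 1) = 0 := by
    rw [Matrix.det_fin_two, Matrix.trace_fin_two] at hdet ⊢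
    simp only [Matrix.sub_apply, Matrix.smul_apply, Matrix.one_apply, smul_eq_mul,
      Matrix.trace_fin_two]
    norm_num
    linear_combination hdet
  obtain ⟨w, hw, hww⟩ := Matrix.exists_mulVec_eq_zero_iff.mpr hdet2
  refine ⟨w, hw, ?_⟩
  rw [Matrix.sub_mulVec, Matrix.smul_mulVec, Matrix.one_mulVec, sub_eq_zero] at hww
  rw [hww, Matrix.trace_fin_two, hM]

lemma exists_decomp {v w : Fin 2 → K} (hv : v ≠ 0) (hvw : ∀ s : K, w ≠ s • v)
    (y : Fin 2 → K) : ∃ α β : K, y = α • v + β • w := by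
  have hd : v 0 * w 1 - v 1 * w 0 ≠ 0 := by
    intro hd
    by_cases h0 : v 0 = 0
    · have h1 : v 1 ≠ 0 := by
        rcases ne_zero2 hv with h | h
        · exact (h h0).elim
        · exact h
      have hw0 : w 0 = 0 := by
        rw [h0, zero_mul, zero_sub, neg_eq_zero, mul_eq_zero] at hd
        rcases hd with h' | h'
        · exact (h1 h').elim
        · exact h'
      apply hvw (w 1 / v 1)
      apply funext2
      · simp [hw0, h0]
      · simp
        field_simp
    · apply hvw (w 0 / v 0)
      apply funext2
      · simp
        field_simp
      · simp
        field_simp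
        linear_combination hd
  set d := v 0 * w 1 - v 1 * w 0 with hdd
  refine ⟨(y 0 * w 1 - y 1 * w 0) / d, (v 0 * y 1 - v 1 * y 0) / d, ?_⟩
  apply funext2
  · simp only [Pi.add_apply, Pi.smul_apply, smul_eq_mul]
    field_simp
    ring
  · simp only [Pi.add_apply, Pi.smul_apply, smul_eq_mul]
    field_simp
    ring

lemma matrix_eq_smul_one {M : Matrix (Fin 2) (Fin 2) K} {v w : Fin 2 → K} (hv : v ≠ 0)
    (hvw : ∀ s : K, w ≠ s • v) {a : K}
    (h1 : M.mulVec v = a • v) (h2 : M.mulVec w = a • w) : M = a • 1 := by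
  apply col_ext
  intro j
  obtain ⟨α, β, hy⟩ := exists_decomp hv hvw (Pi.single j 1 : Fin 2 → K)
  rw [hy, Matrix.mulVec_add, Matrix.mulVec_smul, Matrix.mulVec_smul, h1, h2]
  rw [smul_add, smul_smul, smul_smul, smul_smul, smul_smul, mul_comm a α, mul_comm a β]

lemma mulVec_pow (g : GL (Fin 2) K) {v : Fin 2 → K} {a : K}
    (h : (g : Matrix (Fin 2) (Fin 2) K).mulVec v = a • v) (k : ℕ) :
    ((g ^ k : GL (Fin 2) K) : Matrix (Fin 2) (Fin 2) K).mulVec v = a ^ k • v := by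
  induction k with
  | zero => simp [Matrix.one_mulVec]
  | succ k ih =>
    rw [pow_succ, Units.val_mul, ← Matrix.mulVec_mulVec, h, Matrix.mulVec_smul, ih,
      smul_smul, ← pow_succ']

lemma decomp_zero {v w : Fin 2 → K} (hv : v ≠ 0) (hw : w ≠ 0) (hvw : ∀ s : K, w ≠ s • v)
    {s t : K} (h : s • v + t • w = 0) : s = 0 ∧ t = 0 := by
  by_cases ht : t = 0
  · subst ht
    rw [zero_smul, add_zero] at h
    rcases smul_eq_zero.mp h with h' | h'
    · exact ⟨h', rfl⟩
    · exact (hv h').elim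
  · exfalso
    apply hvw (t⁻¹ * -s)
    have h2 : t • w = (-s) • v := by
      linear_combination (norm := module) h
    rw [← smul_smul, ← h2, smul_smul, inv_mul_cancel₀ ht, one_smul]

lemma decomp_unique {v w : Fin 2 → K} (hv : v ≠ 0) (hw : w ≠ 0) (hvw : ∀ s : K, w ≠ s • v)
    {α β γ δ : K} (h : α • v + β • w = γ • v + δ • w) : α = γ ∧ β = δ := by
  have h2 : (α - γ) • v + (β - δ) • w = 0 := by
    rw [sub_smul, sub_smul]
    linear_combination (norm := module) h
  obtain ⟨h3, h4⟩ := decomp_zero hv hw hvw h2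
  exact ⟨sub_eq_zero.mp h3, sub_eq_zero.mp h4⟩

lemma CH2 (g : GL (Fin 2) K) {v : Fin 2 → K} (hv : v ≠ 0) {a : K}
    (hva : (g : Matrix (Fin 2) (Fin 2) K).mulVec v = a • v)
    (htr : trace (g : Matrix (Fin 2) (Fin 2) K) = a + a) :
    (g : Matrix (Fin 2) (Fin 2) K) * (g : Matrix (Fin 2) (Fin 2) K)
      = (a + a) • (g : Matrix (Fin 2) (Fin 2) K) - (a * a) • 1 := by
  set M := (g : Matrix (Fin 2) (Fin 2) K) with hM
  have hdet := det_eq_mul g hv hva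
  rw [htr] at hdet
  rw [Matrix.det_fin_two] at hdet
  rw [Matrix.trace_fin_two] at htr
  ext i j
  fin_cases i <;> fin_cases j <;>
    simp only [Matrix.mul_apply, Fin.sum_univ_two, Matrix.sub_apply, Matrix.smul_apply,
      Matrix.one_apply, smul_eq_mul, Fin.zero_eta, Fin.mk_one] <;>
    norm_num
  · linear_combination M 0 0 * htr - hdet
  · linear_combination M 0 1 * htr
  · linear_combination M 1 0 * htr
  · linear_combination M 1 1 * htr - hdet

lemma pow_formula (g : GL (Fin 2) K) {a : K}
    (hCH : (g : Matrix (Fin 2) (Fin 2) K) * (g : Matrix (Fin 2) (Fin 2) K)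
      = (a + a) • (g : Matrix (Fin 2) (Fin 2) K) - (a * a) • 1) (k : ℕ) :
    ((g ^ (k + 1) : GL (Fin 2) K) : Matrix (Fin 2) (Fin 2) K)
      = (((k + 1 : ℕ) : K) * a ^ k) • (g : Matrix (Fin 2) (Fin 2) K)
        - (((k : ℕ) : K) * a ^ (k + 1)) • 1 := by
  induction k with
  | zero => simp
  | succ k ih =>
    have hss : g ^ (k + 1 + 1) = g ^ (k + 1) * g := pow_succ g (k + 1)
    rw [hss, Units.val_mul, ih, Matrix.sub_mul, Matrix.smul_mul, Matrix.smul_mul,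
      Matrix.one_mul, hCH]
    match_scalars <;> push_cast <;> ring

lemma unip_pow_p {p : ℕ} (hp : p.Prime) [CharP K p] (g : GL (Fin 2) K) {v : Fin 2 → K}
    (hv : v ≠ 0) {a : K} (hva : (g : Matrix (Fin 2) (Fin 2) K).mulVec v = a • v)
    (htr : trace (g : Matrix (Fin 2) (Fin 2) K) = a + a) :
    (toPGL K g) ^ p = 1 := by
  have ha : a ≠ 0 := by
    intro h
    exact det_ne_zero g (by rw [det_eq_mul g hv hva, h, zero_mul])
  obtain ⟨m, hm⟩ : ∃ m, p = m + 1 := ⟨p - 1, (Nat.succ_pred_eq_of_pos hp.pos).symm⟩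
  have hpow := pow_formula g (CH2 g hv hva htr) m
  have h1 : ((m + 1 : ℕ) : K) = 0 := by rw [← hm]; exact CharP.cast_eq_zero K p
  have h2 : ((m : ℕ) : K) = -1 := by
    push_cast at h1
    linear_combination h1
  rw [h1, h2] at hpow
  have hsc : ((g ^ p : GL (Fin 2) K) : Matrix (Fin 2) (Fin 2) K) = (a ^ p) • 1 := by
    rw [hm, hpow]
    match_scalars <;> ring
  rw [← map_pow]
  exact toPGL_eq_one_of_scalar _ _ (pow_ne_zero _ ha) hsc

lemma dichotomy {p : ℕ} (hp : p.Prime) [CharP K p] [IsAlgClosed K]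
    (σ : Equiv.Perm (ℙ K (Fin 2 → K))) (hσ : σ ∈ pgl K) (h1 : σ ≠ 1) :
    ((∃ x, ∀ y, σ y = y ↔ y = x) ∧ σ ^ p = 1) ∨
    ((∃ x y, x ≠ y ∧ σ x = x ∧ σ y = y ∧ (∀ z, σ z = z → z = x ∨ z = y)) ∧
      (∀ m : ℕ, σ ^ (p * m) = 1 → σ ^ m = 1)) := by
  haveI : Fact p.Prime := ⟨hp⟩
  haveI : ExpChar K p := ExpChar.prime hp
  obtain ⟨g, rfl⟩ := hσ
  obtain ⟨v, a, hv, hva⟩ := exists_eigen g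
  have ha : a ≠ 0 := by
    intro h
    exact det_ne_zero g (by rw [det_eq_mul g hv hva, h, zero_mul])
  set M := ((g : Matrix (Fin 2) (Fin 2) K)) with hM
  by_cases hab : trace M - a = a
  · -- unipotent case
    left
    have htr : trace M = a + a := by linear_combination hab
    have hfix : toPGL K g (Projectivization.mk K v hv) = Projectivization.mk K v hv := by
      rw [toPGL_mk]
      exact (Projectivization.mk_eq_mk_iff' K _ _ _ hv).mpr ⟨a, hva.symm⟩
    have huniq : ∀ y, toPGL K g y = y → y = Projectivization.mk K v hv := by
      intro y
      induction y using Projectivization.ind with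
      | h u hu =>
        intro hy
        rw [toPGL_mk] at hy
        obtain ⟨c, hc⟩ := (Projectivization.mk_eq_mk_iff' K _ _ _ hu).mp hy
        have hdetc := det_eq_mul g hu hc.symm
        have hdeta := det_eq_mul g hv hva
        have h3 : a * (trace M - a) = c * (trace M - c) := hdeta.symm.trans hdetc
        rw [htr] at h3
        have hsq : (a - c) ^ 2 = 0 := by linear_combination h3
        have hca : c = a := by
          have h8 := pow_eq_zero_iff (by norm_num : (2:ℕ) ≠ 0) |>.mp hsq
          exact (sub_eq_zero.mp h8).symm
        by_contra hne
        have hvw : ∀ s : K, u ≠ s • v := by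
          intro s hsu
          exact hne ((Projectivization.mk_eq_mk_iff' K _ _ hu hv).mpr ⟨s, hsu.symm⟩)
        have hMu : M.mulVec u = a • u := by rw [← hc, hca]
        have hscal : M = a • 1 := matrix_eq_smul_one hv hvw hva hMu
        exact h1 (toPGL_eq_one_of_scalar g a ha hscal)
    refine ⟨⟨Projectivization.mk K v hv, fun y => ⟨huniq y, fun h' => by rw [h']; exact hfix⟩⟩, ?_⟩
    exact unip_pow_p hp g hv hva htr
  · -- semisimple case
    right
    obtain ⟨w, hw, hwb⟩ := exists_second_eigen g hv hva
    set b := trace M - a with hb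
    have hbne : b ≠ a := hab
    have hvw : ∀ s : K, w ≠ s • v := by
      intro s hsw
      apply hbne
      have h2 : M.mulVec w = a • w := by
        rw [hsw, Matrix.mulVec_smul, hva, smul_smul, smul_smul, mul_comm]
      apply smul_cancel_vec hw
      rw [← hwb, h2]
    have hxy : Projectivization.mk K v hv ≠ Projectivization.mk K w hw := by
      intro h'
      obtain ⟨s, hs⟩ := (Projectivization.mk_eq_mk_iff' K _ _ hw hv).mp h'.symm
      exact hvw s hs.symm
    have hfixv : toPGL K g (Projectivization.mk K v hv) = Projectivization.mk K v hv := by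
      rw [toPGL_mk]
      exact (Projectivization.mk_eq_mk_iff' K _ _ _ hv).mpr ⟨a, hva.symm⟩
    have hfixw : toPGL K g (Projectivization.mk K w hw) = Projectivization.mk K w hw := by
      rw [toPGL_mk]
      exact (Projectivization.mk_eq_mk_iff' K _ _ _ hw).mpr ⟨b, hwb.symm⟩
    have hclass : ∀ z, toPGL K g z = z →
        z = Projectivization.mk K v hv ∨ z = Projectivization.mk K w hw := by
      intro z
      induction z using Projectivization.ind with
      | h u hu =>
        intro hz
        rw [toPGL_mk] at hz
        obtain ⟨c, hc⟩ := (Projectivization.mk_eq_mk_iff' K _ _ _ hu).mp hz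
        obtain ⟨α, β, hdecomp⟩ := exists_decomp hv hvw u
        have hMu : M.mulVec u = (α * a) • v + (β * b) • w := by
          rw [hdecomp, Matrix.mulVec_add, Matrix.mulVec_smul, Matrix.mulVec_smul, hva, hwb,
            smul_smul, smul_smul]
        have hcu : c • u = (c * α) • v + (c * β) • w := by
          rw [hdecomp, smul_add, smul_smul, smul_smul]
        have heq : (c * α) • v + (c * β) • w = (α * a) • v + (β * b) • w := by
          rw [← hcu, ← hMu, hc]
        obtain ⟨hcoef1, hcoef2⟩ := decomp_unique hv hw hvw heq
        by_cases hα : α = 0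
        · right
          have hβ : β ≠ 0 := by
            intro hβ
            apply hu
            rw [hdecomp, hα, hβ, zero_smul, zero_smul, add_zero]
          apply (Projectivization.mk_eq_mk_iff' K _ _ hu hw).mpr
          exact ⟨β, by rw [hdecomp, hα, zero_smul, zero_add]⟩
        · left
          have hca : c = a := by
            have h9 : c * α = a * α := by linear_combination hcoef1
            exact mul_right_cancel₀ hα h9
          have hβ : β = 0 := by
            by_contra hβ
            apply hbne
            rw [hca] at hcoef2
            have h9 : β * b = β * a := by linear_combination -hcoef2
            exact mul_left_cancel₀ hβ h9
          apply (Projectivization.mk_eq_mk_iff' K _ _ hu hv).mpr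
          exact ⟨α, by rw [hdecomp, hβ, zero_smul, add_zero]⟩
    refine ⟨⟨Projectivization.mk K v hv, Projectivization.mk K w hw, hxy, hfixv, hfixw, hclass⟩, ?_⟩
    intro m hm
    rw [← map_pow] at hm ⊢
    obtain ⟨c, hc0, hc⟩ := scalar_of_toPGL_eq_one _ hm
    have hva' := mulVec_pow g hva (p * m)
    have hwb' := mulVec_pow g hwb (p * m)
    rw [hc, Matrix.smul_mulVec, Matrix.one_mulVec] at hva' hwb'
    have h5 : c = a ^ (p * m) := smul_cancel_vec hv hva'
    have h6 : c = b ^ (p * m) := smul_cancel_vec hw hwb'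
    have h7 : (a ^ m - b ^ m) ^ p = 0 := by
      rw [sub_pow_char, ← pow_mul, ← pow_mul, mul_comm m p, ← h5, ← h6, sub_self]
    have hamb : a ^ m = b ^ m := sub_eq_zero.mp (pow_eq_zero_iff hp.ne_zero |>.mp h7)
    have hgm : ((g ^ m : GL (Fin 2) K) : Matrix (Fin 2) (Fin 2) K) = a ^ m • 1 :=
      matrix_eq_smul_one hv hvw (mulVec_pow g hva m) (by rw [mulVec_pow g hwb m, hamb])
    exact toPGL_eq_one_of_scalar _ _ (pow_ne_zero _ ha) hgm

lemma kp {p : ℕ} (hp : p.Prime) [CharP K p] [IsAlgClosed K]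
    {σ : Equiv.Perm (ℙ K (Fin 2 → K))} (hσ : σ ∈ pgl K) (h1 : σ ≠ 1)
    (hps : σ ^ p = 1) : ∃ x, ∀ y, σ y = y ↔ y = x := by
  rcases dichotomy hp σ hσ h1 with ⟨h, _⟩ | ⟨_, hstrip⟩
  · exact h
  · exfalso
    apply h1
    have h2 := hstrip 1 (by rwa [mul_one])
    rwa [pow_one] at h2

lemma two_points {p : ℕ} (hp : p.Prime) [CharP K p] [IsAlgClosed K]
    {σ : Equiv.Perm (ℙ K (Fin 2 → K))} (hσ : σ ∈ pgl K) (h1 : σ ≠ 1)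
    (hps : σ ^ p ≠ 1) :
    ∃ x y, x ≠ y ∧ σ x = x ∧ σ y = y ∧ ∀ z, σ z = z → z = x ∨ z = y := by
  rcases dichotomy hp σ hσ h1 with ⟨_, hpow⟩ | ⟨h, _⟩
  · exact (hps hpow).elim
  · exact h

lemma strip_all {p : ℕ} {σ : Equiv.Perm (ℙ K (Fin 2 → K))}
    (hstrip : ∀ m : ℕ, σ ^ (p * m) = 1 → σ ^ m = 1) :
    ∀ k : ℕ, σ ^ (p ^ k) = 1 → σ = 1 := by
  intro k
  induction k with
  | zero => intro h; rwa [pow_zero, pow_one] at h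
  | succ k ih =>
    intro h
    apply ih
    apply hstrip
    rwa [← pow_succ']

lemma exists_unip_gen {H : Type*} [Group H] {p : ℕ} (hp : 1 < p) :
    ∀ (k : ℕ) (z : H), z ≠ 1 → z ^ (p ^ k) = 1 →
      ∃ w : H, w ∈ Subgroup.zpowers z ∧ w ≠ 1 ∧ w ^ p = 1 := by
  intro k
  induction k with
  | zero =>
    intro z hz h
    rw [pow_zero, pow_one] at h
    exact (hz h).elim
  | succ k ih =>
    intro z hz h
    by_cases h' : z ^ (p ^ k) = 1
    · exact ih z hz h'
    · refine ⟨z ^ (p ^ k), ?_, h', ?_⟩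
      · exact Subgroup.mem_zpowers_iff.mpr ⟨(p ^ k : ℕ), by rw [zpow_natCast]⟩
      · rw [← pow_mul, ← pow_succ]
        exact h

variable {G : Subgroup (Equiv.Perm (ℙ K (Fin 2 → K)))}

lemma smul_coe (σ : ↥G) (x : ℙ K (Fin 2 → K)) :
    σ • x = (σ : Equiv.Perm (ℙ K (Fin 2 → K))) x := rfl

lemma coe_ne_one {σ : ↥G} (h : σ ≠ 1) : (σ : Equiv.Perm (ℙ K (Fin 2 → K))) ≠ 1 := by
  intro h'
  exact h (by exact_mod_cast h')

lemma pfix {p : ℕ} (hp : p.Prime) [CharP K p] [IsAlgClosed K] (hG : G ≤ pgl K) [Finite ↥G]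
    (Q : Subgroup ↥G) (hQ : IsPGroup p ↥Q) {σ₁ : ↥G} (hmem : σ₁ ∈ Q) (h1 : σ₁ ≠ 1) :
    ∃ x, ∀ σ : ↥G, σ ∈ Q → (σ : Equiv.Perm (ℙ K (Fin 2 → K))) x = x := by
  haveI : Nontrivial ↥Q :=
    nontrivial_of_ne ⟨σ₁, hmem⟩ 1 (fun h => h1 (congrArg Subtype.val h))
  haveI : Fact p.Prime := ⟨hp⟩
  haveI := hQ.center_nontrivial
  obtain ⟨z, hz⟩ := exists_ne (1 : Subgroup.center ↥Q)
  have hz1 : (z : ↥Q) ≠ 1 := fun h => hz (Subtype.ext h)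
  obtain ⟨k, hk⟩ := hQ (z : ↥Q)
  obtain ⟨w, hwmem, hw1, hwp⟩ := exists_unip_gen hp.one_lt k (z : ↥Q) hz1 hk
  have hwc : w ∈ Subgroup.center ↥Q := (Subgroup.zpowers_le.mpr z.2) hwmem
  let τ : ↥G := (w : ↥G)
  have hτ1 : τ ≠ 1 := fun h => hw1 (Subtype.ext h)
  have hτpG : τ ^ p = 1 := by
    have h2 := congrArg (Subtype.val : ↥Q → ↥G) hwp
    push_cast at h2
    exact h2
  have hτp : (τ : Equiv.Perm (ℙ K (Fin 2 → K))) ^ p = 1 := by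
    have h2 := congrArg (Subtype.val : ↥G → Equiv.Perm (ℙ K (Fin 2 → K))) hτpG
    push_cast at h2
    exact h2
  obtain ⟨x, hx⟩ := kp hp (hG τ.2) (coe_ne_one hτ1) hτp
  refine ⟨x, fun σ hσ => ?_⟩
  have hcomm : σ * τ = τ * σ := by
    have h3 := Subgroup.mem_center_iff.mp hwc ⟨σ, hσ⟩
    exact congrArg Subtype.val h3
  have hcommP : (σ : Equiv.Perm (ℙ K (Fin 2 → K))) * τ = (τ : Equiv.Perm (ℙ K (Fin 2 → K))) * σ := by
    exact_mod_cast congrArg Subtype.val hcomm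
  have h4 : (τ : Equiv.Perm (ℙ K (Fin 2 → K))) ((σ : Equiv.Perm (ℙ K (Fin 2 → K))) x)
      = (σ : Equiv.Perm (ℙ K (Fin 2 → K))) x := by
    have h5 := congrFun (congrArg (fun (e : Equiv.Perm (ℙ K (Fin 2 → K))) => ⇑e) hcommP) x
    simp only [Equiv.Perm.coe_mul, Function.comp_apply] at h5
    rw [← h5, (hx x).mpr rfl]
  exact (hx _).mp h4

open scoped Classical

lemma conjfix {σ₀ : ↥G} {z₁ : ℙ K (Fin 2 → K)}
    (hz₁ : ∀ y, (σ₀ : Equiv.Perm (ℙ K (Fin 2 → K))) y = y ↔ y = z₁) (g : ↥G) :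
    ∀ y, ((g * σ₀ * g⁻¹ : ↥G) : Equiv.Perm (ℙ K (Fin 2 → K))) y = y ↔ y = g • z₁ := by
  intro y
  have e : ((g * σ₀ * g⁻¹ : ↥G) : Equiv.Perm (ℙ K (Fin 2 → K))) y
      = (g : Equiv.Perm (ℙ K (Fin 2 → K)))
          ((σ₀ : Equiv.Perm (ℙ K (Fin 2 → K))) (((g : Equiv.Perm (ℙ K (Fin 2 → K))))⁻¹ y)) := by
    push_cast
    simp [Equiv.Perm.mul_apply]
  rw [e]
  constructor
  · intro h
    have h2 : (σ₀ : Equiv.Perm (ℙ K (Fin 2 → K))) ((g : Equiv.Perm (ℙ K (Fin 2 → K)))⁻¹ y)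
        = (g : Equiv.Perm (ℙ K (Fin 2 → K)))⁻¹ y := by
      show _ = ((g : Equiv.Perm (ℙ K (Fin 2 → K)))).symm y
      exact (Equiv.apply_eq_iff_eq_symm_apply _).mp h
    have h3 := (hz₁ _).mp h2
    rw [smul_coe, ← h3]
    exact (Equiv.apply_symm_apply _ y).symm
  · intro h
    rw [h, smul_coe, Equiv.Perm.inv_def, Equiv.symm_apply_apply, (hz₁ z₁).mpr rfl]

lemma conj_ne_one {σ₀ : ↥G} (h : σ₀ ≠ 1) (g : ↥G) : g * σ₀ * g⁻¹ ≠ 1 := by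
  intro h'
  apply h
  have h2 : σ₀ = g⁻¹ * (g * σ₀ * g⁻¹) * g := by group
  rw [h'] at h2
  rw [h2]
  group

lemma conj_pow_p {p : ℕ} {σ₀ : ↥G}
    (hσ₀p : (σ₀ : Equiv.Perm (ℙ K (Fin 2 → K))) ^ p = 1) (g : ↥G) :
    ((g * σ₀ * g⁻¹ : ↥G) : Equiv.Perm (ℙ K (Fin 2 → K))) ^ p = 1 := by
  have e : ((g * σ₀ * g⁻¹ : ↥G) : Equiv.Perm (ℙ K (Fin 2 → K)))
      = (g : Equiv.Perm (ℙ K (Fin 2 → K))) * σ₀ * ((g : Equiv.Perm (ℙ K (Fin 2 → K))))⁻¹ := by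
    push_cast
    rfl
  rw [e, conj_pow, hσ₀p]
  group

lemma stab_filter_card [Fintype ↥G] (x : ℙ K (Fin 2 → K)) :
    (Finset.univ.filter (fun σ : ↥G => σ • x = x)).card
      = Nat.card (MulAction.stabilizer G x) := by
  rw [Nat.card_eq_fintype_card, Fintype.card_subtype]
  congr 1

lemma stab_filter_card' [Fintype ↥G] (x : ℙ K (Fin 2 → K)) :
    ((Finset.univ.erase (1 : ↥G)).filter (fun σ : ↥G => σ • x = x)).card + 1
      = Nat.card (MulAction.stabilizer G x) := by
  have h1mem : (1 : ↥G) ∈ Finset.univ.filter (fun σ : ↥G => σ • x = x) :=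
    Finset.mem_filter.mpr ⟨Finset.mem_univ _, one_smul _ _⟩
  rw [← stab_filter_card x, Finset.filter_erase, Finset.card_erase_of_mem h1mem]
  have hpos : 0 < (Finset.univ.filter (fun σ : ↥G => σ • x = x)).card :=
    Finset.card_pos.mpr ⟨1, h1mem⟩
  omega

lemma stab_card_smul (g : ↥G) (x : ℙ K (Fin 2 → K)) :
    Nat.card (MulAction.stabilizer G (g • x)) = Nat.card (MulAction.stabilizer G x) := by
  rw [MulAction.stabilizer_smul_eq_stabilizer_map_conj]
  exact (Nat.card_congr
    ((MulAction.stabilizer ↥G x).equivMapOfInjective _ (MulEquiv.injective _)).toEquiv).symm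

lemma orbit_stab [Fintype ↥G] (z : ℙ K (Fin 2 → K)) (h : (MulAction.orbit G z).Finite) :
    h.toFinset.card * Nat.card (MulAction.stabilizer G z) = Fintype.card ↥G := by
  haveI := h.fintype
  haveI : Fintype ↥(MulAction.stabilizer G z) := Fintype.ofFinite _
  rw [Set.Finite.card_toFinset, Nat.card_eq_fintype_card]
  exact MulAction.card_orbit_mul_card_stabilizer_eq_card_group ↥G z

lemma dc_sum [Fintype ↥G] (W : Finset (ℙ K (Fin 2 → K))) :
    ∑ x ∈ W, ((Finset.univ.erase (1 : ↥G)).filter (fun σ => σ • x = x)).card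
      = ∑ σ ∈ Finset.univ.erase (1 : ↥G), (W.filter (fun x => σ • x = x)).card := by
  simp only [Finset.card_filter]
  exact Finset.sum_comm

lemma orbsum [Fintype ↥G] (z : ℙ K (Fin 2 → K)) (h : (MulAction.orbit G z).Finite) :
    ∑ x ∈ h.toFinset, ((Finset.univ.erase (1 : ↥G)).filter (fun σ : ↥G => σ • x = x)).card
      + h.toFinset.card = Fintype.card ↥G := by
  have h2 : ∑ x ∈ h.toFinset, (((Finset.univ.erase (1 : ↥G)).filter
      (fun σ : ↥G => σ • x = x)).card + 1)
      = ∑ x ∈ h.toFinset, Nat.card (MulAction.stabilizer G x) :=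
    Finset.sum_congr rfl (fun x _ => stab_filter_card' x)
  rw [Finset.sum_add_distrib, Finset.sum_const, smul_eq_mul, mul_one] at h2
  have h3 : ∀ x ∈ h.toFinset, Nat.card (MulAction.stabilizer G x)
      = Nat.card (MulAction.stabilizer G z) := by
    intro x hx
    rw [Set.Finite.mem_toFinset] at hx
    obtain ⟨g, rfl⟩ := hx
    exact stab_card_smul g z
  rw [Finset.sum_congr rfl h3, Finset.sum_const, smul_eq_mul] at h2
  have h4 := orbit_stab z h
  omega

lemma fix_bound {p : ℕ} (hp : p.Prime) [CharP K p] [IsAlgClosed K] (hG : G ≤ pgl K)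
    {σ : ↥G} (hσne : σ ≠ 1) (W : Finset (ℙ K (Fin 2 → K))) :
    (W.filter (fun x => σ • x = x)).card
      ≤ if (σ : Equiv.Perm (ℙ K (Fin 2 → K))) ^ p = 1 then 1 else 2 := by
  by_cases hcase : (σ : Equiv.Perm (ℙ K (Fin 2 → K))) ^ p = 1
  · rw [if_pos hcase]
    obtain ⟨x₀, hx₀⟩ := kp hp (hG σ.2) (coe_ne_one hσne) hcase
    have hsub : W.filter (fun x => σ • x = x) ⊆ {x₀} := by
      intro x hx
      rw [Finset.mem_filter] at hx
      rw [Finset.mem_singleton]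
      exact (hx₀ x).mp ((smul_coe σ x).symm.trans hx.2)
    calc (W.filter (fun x => σ • x = x)).card ≤ ({x₀} : Finset _).card :=
          Finset.card_le_card hsub
      _ = 1 := Finset.card_singleton x₀
  · rw [if_neg hcase]
    obtain ⟨x, y, hxy, _, _, hcl⟩ := two_points hp (hG σ.2) (coe_ne_one hσne) hcase
    have hsub : W.filter (fun x' => σ • x' = x') ⊆ {x, y} := by
      intro x' hx'
      rw [Finset.mem_filter] at hx'
      rcases hcl x' ((smul_coe σ x').symm.trans hx'.2) with h | h <;> simp [h]
    calc (W.filter (fun x' => σ • x' = x')).card ≤ ({x, y} : Finset _).card :=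
          Finset.card_le_card hsub
      _ ≤ 2 := by
          rw [Finset.card_pair hxy]

lemma sum_bound {p : ℕ} (hp : p.Prime) [CharP K p] [IsAlgClosed K] (hG : G ≤ pgl K)
    [Fintype ↥G] (W : Finset (ℙ K (Fin 2 → K))) :
    ∑ σ ∈ Finset.univ.erase (1 : ↥G), (W.filter (fun x => σ • x = x)).card
      ≤ ((Finset.univ.erase (1 : ↥G)).filter
          (fun σ : ↥G => (σ : Equiv.Perm (ℙ K (Fin 2 → K))) ^ p = 1)).card
        + 2 * ((Finset.univ.erase (1 : ↥G)).filter
          (fun σ : ↥G => ¬ (σ : Equiv.Perm (ℙ K (Fin 2 → K))) ^ p = 1)).card := by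
  calc ∑ σ ∈ Finset.univ.erase (1 : ↥G), (W.filter (fun x => σ • x = x)).card
      ≤ ∑ σ ∈ Finset.univ.erase (1 : ↥G),
          (if (σ : Equiv.Perm (ℙ K (Fin 2 → K))) ^ p = 1 then 1 else 2) :=
        Finset.sum_le_sum (fun σ hσ => fix_bound hp hG (Finset.mem_erase.mp hσ).1 W)
    _ = _ := by
        rw [Finset.sum_ite, Finset.sum_const, Finset.sum_const, smul_eq_mul, smul_eq_mul,
          mul_one]
        ring

lemma us_count {p : ℕ} [Fintype ↥G] :
    ((Finset.univ.erase (1 : ↥G)).filter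
        (fun σ : ↥G => (σ : Equiv.Perm (ℙ K (Fin 2 → K))) ^ p = 1)).card
      + ((Finset.univ.erase (1 : ↥G)).filter
        (fun σ : ↥G => ¬ (σ : Equiv.Perm (ℙ K (Fin 2 → K))) ^ p = 1)).card
      + 1 = Fintype.card ↥G := by
  rw [Finset.card_filter_add_card_filter_not]
  rw [Finset.card_erase_of_mem (Finset.mem_univ _), Finset.card_univ]
  have : 0 < Fintype.card ↥G := Fintype.card_pos
  omega

lemma orbmem {z x : ℙ K (Fin 2 → K)} (hx : x ∈ MulAction.orbit G z) :
    MulAction.orbit G x = MulAction.orbit G z := by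
  obtain ⟨g, rfl⟩ := hx
  exact MulAction.orbit_smul g z

lemma m1_le_u {p : ℕ} [Fintype ↥G]
    {σ₀ : ↥G} (hσ₀ne : σ₀ ≠ 1)
    (hσ₀p : (σ₀ : Equiv.Perm (ℙ K (Fin 2 → K))) ^ p = 1)
    {z₁ : ℙ K (Fin 2 → K)} (hz₁ : ∀ y, (σ₀ : Equiv.Perm (ℙ K (Fin 2 → K))) y = y ↔ y = z₁)
    (h : (MulAction.orbit G z₁).Finite) :
    h.toFinset.card ≤ ((Finset.univ.erase (1 : ↥G)).filter
        (fun σ : ↥G => (σ : Equiv.Perm (ℙ K (Fin 2 → K))) ^ p = 1)).card := by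
  have hchoice : ∀ x ∈ h.toFinset, ∃ g : ↥G, g • z₁ = x := by
    intro x hx
    rw [Set.Finite.mem_toFinset] at hx
    exact hx
  choose gf hgf using hchoice
  apply Finset.card_le_card_of_injOn
    (fun x => if hx : x ∈ h.toFinset then gf x hx * σ₀ * (gf x hx)⁻¹ else 1)
  · intro x hx
    simp only [Finset.mem_coe] at hx ⊢
    rw [dif_pos hx]
    exact Finset.mem_filter.mpr ⟨Finset.mem_erase.mpr ⟨conj_ne_one hσ₀ne _, Finset.mem_univ _⟩,
      conj_pow_p hσ₀p _⟩
  · intro x hx y hy hfeq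
    simp only [Finset.mem_coe] at hx hy
    simp only [dif_pos hx, dif_pos hy] at hfeq
    have hx' : ∀ y', ((gf x hx * σ₀ * (gf x hx)⁻¹ : ↥G) : Equiv.Perm (ℙ K (Fin 2 → K))) y' = y'
        ↔ y' = x := by
      have h5 := conjfix hz₁ (gf x hx)
      rwa [hgf x hx] at h5
    have hy' : ∀ y', ((gf y hy * σ₀ * (gf y hy)⁻¹ : ↥G) : Equiv.Perm (ℙ K (Fin 2 → K))) y' = y'
        ↔ y' = y := by
      have h5 := conjfix hz₁ (gf y hy)
      rwa [hgf y hy] at h5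
    have hcoe := congrArg (Subtype.val : ↥G → Equiv.Perm (ℙ K (Fin 2 → K))) hfeq
    apply (hy' x).mp
    rw [← hcoe]
    exact (hx' x).mpr rfl

lemma contra_three {p : ℕ} (hp : p.Prime) [CharP K p] [IsAlgClosed K] (hG : G ≤ pgl K)
    [Fintype ↥G]
    {σ₀ : ↥G} (hσ₀ne : σ₀ ≠ 1)
    (hσ₀p : (σ₀ : Equiv.Perm (ℙ K (Fin 2 → K))) ^ p = 1)
    {z₁ : ℙ K (Fin 2 → K)} (hz₁ : ∀ y, (σ₀ : Equiv.Perm (ℙ K (Fin 2 → K))) y = y ↔ y = z₁)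
    {w₂ w₃ : ℙ K (Fin 2 → K)}
    (h2 : MulAction.stabilizer G w₂ ≠ ⊥) (h3 : MulAction.stabilizer G w₃ ≠ ⊥)
    (h21 : MulAction.orbit G w₂ ≠ MulAction.orbit G z₁)
    (h31 : MulAction.orbit G w₃ ≠ MulAction.orbit G z₁)
    (h23 : MulAction.orbit G w₂ ≠ MulAction.orbit G w₃) : False := by
  have hfin1 : (MulAction.orbit G z₁).Finite := Set.finite_range _
  have hfin2 : (MulAction.orbit G w₂).Finite := Set.finite_range _
  have hfin3 : (MulAction.orbit G w₃).Finite := Set.finite_range _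
  have hdisj : ∀ (a b : ℙ K (Fin 2 → K)) (ha : (MulAction.orbit G a).Finite)
      (hb : (MulAction.orbit G b).Finite), MulAction.orbit G a ≠ MulAction.orbit G b →
      Disjoint ha.toFinset hb.toFinset := by
    intro a b ha hb hab
    rw [Finset.disjoint_left]
    intro x hxa hxb
    rw [Set.Finite.mem_toFinset] at hxa hxb
    exact hab ((orbmem hxa).symm.trans (orbmem hxb))
  have d21 := hdisj _ _ hfin2 hfin1 h21
  have d31 := hdisj _ _ hfin3 hfin1 h31
  have d23 := hdisj _ _ hfin2 hfin3 h23
  set W : Finset (ℙ K (Fin 2 → K)) := (hfin1.toFinset ∪ hfin2.toFinset) ∪ hfin3.toFinset with hW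
  have hsplit : ∑ x ∈ W, ((Finset.univ.erase (1 : ↥G)).filter (fun σ : ↥G => σ • x = x)).card
      = ∑ x ∈ hfin1.toFinset, ((Finset.univ.erase (1 : ↥G)).filter (fun σ : ↥G => σ • x = x)).card
        + ∑ x ∈ hfin2.toFinset, ((Finset.univ.erase (1 : ↥G)).filter (fun σ : ↥G => σ • x = x)).card
        + ∑ x ∈ hfin3.toFinset, ((Finset.univ.erase (1 : ↥G)).filter (fun σ : ↥G => σ • x = x)).card := by
    rw [hW, Finset.sum_union, Finset.sum_union]
    · exact d21.symm
    · rw [Finset.disjoint_union_left]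
      exact ⟨d31.symm, d23⟩
  have ho1 := orbsum (G := G) z₁ hfin1
  have ho2 := orbsum (G := G) w₂ hfin2
  have ho3 := orbsum (G := G) w₃ hfin3
  have hdc := dc_sum (G := G) W
  have hsb := sum_bound hp hG W
  have hus := us_count (G := G) (p := p)
  have hm1 := m1_le_u hσ₀ne hσ₀p hz₁ hfin1
  -- e₂, e₃ ≥ 2 gives 2 * m ≤ n
  have hstab2 : ∀ (w : ℙ K (Fin 2 → K)) (hf : (MulAction.orbit G w).Finite),
      MulAction.stabilizer G w ≠ ⊥ → 2 * hf.toFinset.card ≤ Fintype.card ↥G := by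
    intro w hf hne
    have he : 2 ≤ Nat.card (MulAction.stabilizer G w) :=
      (Subgroup.one_lt_card_iff_ne_bot _).mpr hne
    calc 2 * hf.toFinset.card ≤ Nat.card (MulAction.stabilizer G w) * hf.toFinset.card :=
          Nat.mul_le_mul_right _ he
      _ = Fintype.card ↥G := by rw [mul_comm]; exact orbit_stab w hf
  have hb2 := hstab2 w₂ hfin2 h2
  have hb3 := hstab2 w₃ hfin3 h3
  rw [hdc] at hsplit
  omega

lemma contra_one {p : ℕ} (hp : p.Prime) [CharP K p] [IsAlgClosed K] (hG : G ≤ pgl K)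
    [Fintype ↥G]
    {σ₀ : ↥G} (hσ₀ne : σ₀ ≠ 1)
    (hσ₀p : (σ₀ : Equiv.Perm (ℙ K (Fin 2 → K))) ^ p = 1)
    {z₁ : ℙ K (Fin 2 → K)} (hz₁ : ∀ y, (σ₀ : Equiv.Perm (ℙ K (Fin 2 → K))) y = y ↔ y = z₁)
    {τ : ↥G} (hτne : τ ≠ 1) (hτp : (τ : Equiv.Perm (ℙ K (Fin 2 → K))) ^ p ≠ 1)
    (hall : ∀ w : ℙ K (Fin 2 → K), MulAction.stabilizer G w ≠ ⊥ →
      MulAction.orbit G w = MulAction.orbit G z₁) : False := by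
  have hfin1 : (MulAction.orbit G z₁).Finite := Set.finite_range _
  -- all fixed points of nontrivial elements lie in the orbit of z₁
  have hfixW : ∀ (σ : ↥G), σ ≠ 1 → ∀ x, (σ : Equiv.Perm (ℙ K (Fin 2 → K))) x = x →
      x ∈ hfin1.toFinset := by
    intro σ hσne x hx
    rw [Set.Finite.mem_toFinset]
    have hstab : MulAction.stabilizer G x ≠ ⊥ := by
      intro hb
      have hmem : σ ∈ MulAction.stabilizer G x := by
        rw [MulAction.mem_stabilizer_iff]
        rw [smul_coe]
        exact hx
      rw [hb, Subgroup.mem_bot] at hmem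
      exact hσne hmem
    rw [← hall x hstab]
    exact MulAction.mem_orbit_self x
  have hexact : ∀ σ ∈ Finset.univ.erase (1 : ↥G), (hfin1.toFinset.filter (fun x => σ • x = x)).card
      = if (σ : Equiv.Perm (ℙ K (Fin 2 → K))) ^ p = 1 then 1 else 2 := by
    intro σ hσA
    have hσne : σ ≠ 1 := (Finset.mem_erase.mp hσA).1
    by_cases hcase : (σ : Equiv.Perm (ℙ K (Fin 2 → K))) ^ p = 1
    · rw [if_pos hcase]
      obtain ⟨x₀, hx₀⟩ := kp hp (hG σ.2) (coe_ne_one hσne) hcase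
      have : hfin1.toFinset.filter (fun x => σ • x = x) = {x₀} := by
        apply Finset.ext
        intro y
        rw [Finset.mem_filter, Finset.mem_singleton]
        constructor
        · intro ⟨_, hy⟩
          exact (hx₀ y).mp ((smul_coe σ y).symm.trans hy)
        · intro hy
          subst hy
          have hfix : (σ : Equiv.Perm (ℙ K (Fin 2 → K))) y = y := (hx₀ y).mpr rfl
          exact ⟨hfixW σ hσne y hfix, (smul_coe σ y).trans hfix⟩
      rw [this, Finset.card_singleton]
    · rw [if_neg hcase]
      obtain ⟨x, y, hxy, hfx, hfy, hcl⟩ := two_points hp (hG σ.2) (coe_ne_one hσne) hcase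
      have : hfin1.toFinset.filter (fun x' => σ • x' = x') = {x, y} := by
        apply Finset.ext
        intro z
        rw [Finset.mem_filter, Finset.mem_insert, Finset.mem_singleton]
        constructor
        · intro ⟨_, hz⟩
          exact hcl z ((smul_coe σ z).symm.trans hz)
        · rintro (rfl | rfl)
          · exact ⟨hfixW σ hσne _ hfx, (smul_coe σ _).trans hfx⟩
          · exact ⟨hfixW σ hσne _ hfy, (smul_coe σ _).trans hfy⟩
      rw [this, Finset.card_pair hxy]
  have hsum : ∑ σ ∈ Finset.univ.erase (1 : ↥G), (hfin1.toFinset.filter (fun x => σ • x = x)).card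
      = ((Finset.univ.erase (1 : ↥G)).filter (fun σ : ↥G => (σ : Equiv.Perm (ℙ K (Fin 2 → K))) ^ p = 1)).card
        + 2 * ((Finset.univ.erase (1 : ↥G)).filter (fun σ : ↥G => ¬ (σ : Equiv.Perm (ℙ K (Fin 2 → K))) ^ p = 1)).card := by
    rw [Finset.sum_congr rfl hexact, Finset.sum_ite, Finset.sum_const, Finset.sum_const,
      smul_eq_mul, smul_eq_mul, mul_one]
    ring
  have hdc := dc_sum (G := G) hfin1.toFinset
  have ho1 := orbsum (G := G) z₁ hfin1
  have hus := us_count (G := G) (p := p)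
  have hm1pos : 0 < hfin1.toFinset.card := by
    apply Finset.card_pos.mpr
    exact ⟨z₁, by rw [Set.Finite.mem_toFinset]; exact MulAction.mem_orbit_self z₁⟩
  have hspos : 0 < ((Finset.univ.erase (1 : ↥G)).filter (fun σ : ↥G => ¬ (σ : Equiv.Perm (ℙ K (Fin 2 → K))) ^ p = 1)).card := by
    apply Finset.card_pos.mpr
    exact ⟨τ, Finset.mem_filter.mpr ⟨Finset.mem_erase.mpr ⟨hτne, Finset.mem_univ _⟩, hτp⟩⟩
  rw [hdc, hsum] at ho1
  omega

end Core

/-- A finite subgroup `G` of `PGL(2, ℚ̄_q)` with `p ∣ |G|` has at most two non-regular orbits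
on the projective line, and exactly one non-regular orbit iff `G` is a `p`-group. -/
theorem stmt6 (Fq : Type*) [Field Fq] [Fintype Fq] (p : ℕ) (hp : p.Prime) [CharP Fq p]
    (K : Type*) [Field K] [Algebra Fq K] [IsAlgClosure Fq K]
    (G : Subgroup (Equiv.Perm (ℙ K (Fin 2 → K)))) (hG : G ≤ pgl K) (hfin : Finite G)
    (hdvd : p ∣ Nat.card G) :
    (∃ z₁ z₂ : ℙ K (Fin 2 → K), ∀ z : ℙ K (Fin 2 → K),
      MulAction.stabilizer G z ≠ ⊥ →
      MulAction.orbit G z = MulAction.orbit G z₁ ∨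
      MulAction.orbit G z = MulAction.orbit G z₂) ∧
    ((∃ z : ℙ K (Fin 2 → K), MulAction.stabilizer G z ≠ ⊥ ∧
        ∀ w : ℙ K (Fin 2 → K), MulAction.stabilizer G w ≠ ⊥ →
          MulAction.orbit G w = MulAction.orbit G z) ↔ IsPGroup p G) := by
  haveI : Fact p.Prime := ⟨hp⟩
  haveI : IsAlgClosed K := IsAlgClosure.isAlgClosed Fq
  haveI : CharP K p := charP_of_injective_algebraMap (algebraMap Fq K).injective p
  haveI : Fintype ↥G := Fintype.ofFinite _
  classical
  have hcard : p ∣ Fintype.card ↥G := by rwa [← Nat.card_eq_fintype_card]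
  obtain ⟨σ₀, hσ₀⟩ := exists_prime_orderOf_dvd_card p hcard
  have hσ₀ne : σ₀ ≠ 1 := by
    intro h
    rw [h, orderOf_one] at hσ₀
    exact hp.one_lt.ne' hσ₀.symm
  have hσ₀pG : σ₀ ^ p = 1 := by rw [← hσ₀]; exact pow_orderOf_eq_one σ₀
  have hσ₀p : (σ₀ : Equiv.Perm (ℙ K (Fin 2 → K))) ^ p = 1 := by
    have h2 := congrArg (Subtype.val : ↥G → Equiv.Perm (ℙ K (Fin 2 → K))) hσ₀pG
    push_cast at h2
    exact h2
  obtain ⟨z₁, hz₁⟩ := kp hp (hG σ₀.2) (coe_ne_one hσ₀ne) hσ₀p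
  have hz₁stab : MulAction.stabilizer G z₁ ≠ ⊥ := by
    intro hb
    have hmem : σ₀ ∈ MulAction.stabilizer G z₁ := by
      rw [MulAction.mem_stabilizer_iff, smul_coe]
      exact (hz₁ z₁).mpr rfl
    rw [hb, Subgroup.mem_bot] at hmem
    exact hσ₀ne hmem
  constructor
  · -- at most two non-regular orbits
    by_cases hex : ∃ w, MulAction.stabilizer G w ≠ ⊥ ∧ w ∉ MulAction.orbit G z₁
    · obtain ⟨w₂, hw₂stab, hw₂no⟩ := hex
      refine ⟨z₁, w₂, fun z hz => ?_⟩
      by_cases hz1 : z ∈ MulAction.orbit G z₁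
      · left; exact orbmem hz1
      · by_cases hz2 : z ∈ MulAction.orbit G w₂
        · right; exact orbmem hz2
        · exfalso
          have e21 : MulAction.orbit G w₂ ≠ MulAction.orbit G z₁ := fun h =>
            hw₂no (h ▸ MulAction.mem_orbit_self w₂)
          have e31 : MulAction.orbit G z ≠ MulAction.orbit G z₁ := fun h =>
            hz1 (h ▸ MulAction.mem_orbit_self z)
          have e23 : MulAction.orbit G w₂ ≠ MulAction.orbit G z := fun h =>
            hz2 (by rw [h]; exact MulAction.mem_orbit_self z)
          exact contra_three hp hG hσ₀ne hσ₀p hz₁ hw₂stab hz e21 e31 e23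
    · push_neg at hex
      exact ⟨z₁, z₁, fun z hz => Or.inl (orbmem (hex z hz))⟩
  · constructor
    · -- exactly one non-regular orbit → p-group
      rintro ⟨zs, hzsstab, hzsall⟩
      by_contra hnpg
      have hnall : ¬ ∀ q : ℕ, q.Prime → q ∣ Fintype.card ↥G → q = p := by
        intro hall'
        apply hnpg
        rw [IsPGroup.iff_card (p := p)]
        have hcardeq := Nat.eq_prime_pow_of_unique_prime_dvd (n := Fintype.card ↥G) (p := p)
          Fintype.card_ne_zero (fun {d} hq hd => hall' d hq hd)
        exact ⟨_, by rw [Nat.card_eq_fintype_card, hcardeq]⟩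
      push_neg at hnall
      obtain ⟨l, hlp, hld, hlne⟩ := hnall
      haveI : Fact l.Prime := ⟨hlp⟩
      obtain ⟨τ, hτ⟩ := exists_prime_orderOf_dvd_card l hld
      have hτne : τ ≠ 1 := by
        intro h
        rw [h, orderOf_one] at hτ
        exact hlp.one_lt.ne' hτ.symm
      have hτp : (τ : Equiv.Perm (ℙ K (Fin 2 → K))) ^ p ≠ 1 := by
        intro h
        have hG1 : τ ^ p = 1 := by
          apply Subtype.ext
          push_cast
          exact h
        have hdvd' : orderOf τ ∣ p := orderOf_dvd_of_pow_eq_one hG1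
        rw [hτ] at hdvd'
        exact hlne ((Nat.prime_dvd_prime_iff_eq hlp hp).mp hdvd')
      have horbs : MulAction.orbit G z₁ = MulAction.orbit G zs := hzsall z₁ hz₁stab
      have hall' : ∀ w : ℙ K (Fin 2 → K), MulAction.stabilizer G w ≠ ⊥ →
          MulAction.orbit G w = MulAction.orbit G z₁ := by
        intro w hw
        rw [hzsall w hw, horbs]
      exact contra_one hp hG hσ₀ne hσ₀p hz₁ hτne hτp hall'
    · -- p-group → exactly one non-regular orbit
      intro hpg
      have htop : IsPGroup p ↥(⊤ : Subgroup ↥G) := by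
        intro g
        obtain ⟨k, hk⟩ := hpg g.1
        exact ⟨k, by apply Subtype.ext; push_cast; exact hk⟩
      obtain ⟨x₀, hx₀⟩ := pfix hp hG ⊤ htop (Subgroup.mem_top σ₀) hσ₀ne
      have hx₀stab : MulAction.stabilizer G x₀ ≠ ⊥ := by
        intro hb
        have hmem : σ₀ ∈ MulAction.stabilizer G x₀ := by
          rw [MulAction.mem_stabilizer_iff, smul_coe]
          exact hx₀ σ₀ (Subgroup.mem_top σ₀)
        rw [hb, Subgroup.mem_bot] at hmem
        exact hσ₀ne hmem
      refine ⟨x₀, hx₀stab, fun w hw => ?_⟩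
      haveI : Nontrivial ↥(MulAction.stabilizer G w) :=
        (Subgroup.nontrivial_iff_ne_bot _).mpr hw
      obtain ⟨σ, hσmem, hσne1⟩ :=
        (Subgroup.nontrivial_iff_exists_ne_one _).mp this
      have hσw : (σ : Equiv.Perm (ℙ K (Fin 2 → K))) w = w := by
        rw [← smul_coe]
        exact MulAction.mem_stabilizer_iff.mp hσmem
      have hσx₀ : (σ : Equiv.Perm (ℙ K (Fin 2 → K))) x₀ = x₀ := hx₀ σ (Subgroup.mem_top σ)
      obtain ⟨k, hk⟩ := hpg σ
      have hkP : (σ : Equiv.Perm (ℙ K (Fin 2 → K))) ^ (p ^ k) = 1 := by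
        have h2 := congrArg (Subtype.val : ↥G → Equiv.Perm (ℙ K (Fin 2 → K))) hk
        push_cast at h2
        exact h2
      rcases dichotomy hp _ (hG σ.2) (coe_ne_one hσne1) with ⟨⟨x', hx'⟩, _⟩ | ⟨_, hstrip⟩
      · have hw' : w = x' := (hx' w).mp hσw
        have hx0' : x₀ = x' := (hx' x₀).mp hσx₀
        rw [hw', ← hx0']
      · exact ((coe_ne_one hσne1) (strip_all hstrip k hkP)).elim


end PaperPGL
end

section
/- Let G, H be subgroups of Sym(Ω) for a finite set Ω, with G acting transitively and regularly, and with the actions of G and H commuting pointwise. Then G transitively permutes the H-orbits on Ω, and the stabilizer in G of any given H-orbit is isomorphic to H. -/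
open Matrix Polynomial
open scoped LinearAlgebra.Projectivization MatrixGroups Pointwise

namespace PaperPGL

/-- If `G`, `H` are subgroups of `Sym(Ω)`, `Ω` finite, with `G` transitive and regular and the
actions commuting pointwise, then `G` transitively permutes the `H`-orbits, and the stabilizer
in `G` of any `H`-orbit is isomorphic to `H`. -/
theorem stmt12 {Ω : Type*} [Finite Ω] (G H : Subgroup (Equiv.Perm Ω))
    (hGtrans : ∀ a b : Ω, ∃ g ∈ G, g a = b)
    (hGfree : ∀ g ∈ G, ∀ a : Ω, g a = a → g = 1)
    (hcomm : ∀ g ∈ G, ∀ h ∈ H, ∀ a : Ω, g (h a) = h (g a)) :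
    (∀ a b : Ω, ∃ g : G, g • (MulAction.orbit H a) = MulAction.orbit H b) ∧
    (∀ a : Ω, Nonempty ((MulAction.stabilizer G (MulAction.orbit H a)) ≃* H)) := by
  classical
  -- uniqueness from regularity
  have huniq : ∀ g ∈ G, ∀ g' ∈ G, ∀ a : Ω, g a = g' a → g = g' := by
    intro g hg g' hg' a hga
    have h1 : (g'⁻¹ * g) a = a := by
      simp [Equiv.Perm.mul_apply, hga]
    have h2 := hGfree _ (mul_mem (inv_mem hg') hg) a h1
    exact (inv_mul_eq_one.mp h2).symm
  -- H is semiregular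
  have hHfree : ∀ h ∈ H, ∀ a : Ω, h a = a → h = 1 := by
    intro h hh a ha
    ext c
    obtain ⟨g, hg, hgc⟩ := hGtrans a c
    have h1 := hcomm g hg h hh a
    rw [ha, hgc] at h1
    simpa using h1.symm
  -- key: g • orbit H a = orbit H (g a)
  have horb : ∀ g ∈ G, ∀ a : Ω, g • (MulAction.orbit H a) = MulAction.orbit H (g a) := by
    intro g hg a
    ext x
    rw [Set.mem_smul_set_iff_inv_smul_mem]
    simp only [MulAction.mem_orbit_iff]
    constructor
    · rintro ⟨h, hh⟩
      refine ⟨h, ?_⟩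
      have := hcomm g hg (h : Equiv.Perm Ω) h.2 a
      have hx : g ((h : Equiv.Perm Ω) a) = x := by
        have : (h : Equiv.Perm Ω) a = g⁻¹ x := hh
        rw [this]; simp
      rw [← hx, this]
      rfl
    · rintro ⟨h, rfl⟩
      refine ⟨h, ?_⟩
      have := hcomm g hg (h : Equiv.Perm Ω) h.2 a
      show (h : Equiv.Perm Ω) a = g⁻¹ ((h : Equiv.Perm Ω) (g a))
      rw [← this]; simp
  refine ⟨?_, ?_⟩
  · intro a b
    obtain ⟨g, hg, hgab⟩ := hGtrans a b
    exact ⟨⟨g, hg⟩, by rw [show ((⟨g, hg⟩ : G) • (MulAction.orbit H a)) = g • (MulAction.orbit H a) from rfl, horb g hg a, hgab]⟩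
  · intro a
    -- build φ : H →* stabilizer
    have hch : ∀ h : H, ∃ g ∈ G, g a = (h : Equiv.Perm Ω)⁻¹ a := fun h => hGtrans a _
    choose gg hgg hgga using hch
    have hmem : ∀ h : H, (⟨gg h, hgg h⟩ : G) ∈ MulAction.stabilizer G (MulAction.orbit H a) := by
      intro h
      rw [MulAction.mem_stabilizer_iff]
      show gg h • (MulAction.orbit H a) = MulAction.orbit H a
      rw [horb _ (hgg h) a, hgga h]
      -- orbit H (h⁻¹ a) = orbit H a
      exact MulAction.orbit_eq_iff.mpr ⟨h⁻¹, rfl⟩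
    let φ : H →* MulAction.stabilizer G (MulAction.orbit H a) :=
      { toFun := fun h => ⟨⟨gg h, hgg h⟩, hmem h⟩
        map_one' := by
          have : gg 1 = 1 := by
            apply huniq _ (hgg 1) 1 (one_mem G) a
            simpa using hgga 1
          simp only [Subtype.ext_iff, this]
          rfl
        map_mul' := by
          intro h₁ h₂
          have key : gg (h₁ * h₂) = gg h₁ * gg h₂ := by
            apply huniq _ (hgg _) _ (mul_mem (hgg h₁) (hgg h₂)) a
            rw [hgga (h₁ * h₂)]
            show _ = gg h₁ ((gg h₂) a)
            rw [hgga h₂]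
            have := hcomm (gg h₁) (hgg h₁) ((h₂ : Equiv.Perm Ω)⁻¹) (inv_mem h₂.2) a
            rw [this, hgga h₁]
            simp [Equiv.Perm.mul_apply]
          simp only [Subtype.ext_iff, key]
          rfl }
    have hinj : Function.Injective φ := by
      intro h₁ h₂ hEq
      have : gg h₁ = gg h₂ :=
        congrArg (fun x : MulAction.stabilizer G (MulAction.orbit H a) =>
          ((x : G) : Equiv.Perm Ω)) hEq
      have ha' : (h₁ : Equiv.Perm Ω)⁻¹ a = (h₂ : Equiv.Perm Ω)⁻¹ a := by
        rw [← hgga h₁, ← hgga h₂, this]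
      have : ((h₁ : Equiv.Perm Ω) * (h₂ : Equiv.Perm Ω)⁻¹) a = a := by
        show (h₁ : Equiv.Perm Ω) ((h₂ : Equiv.Perm Ω)⁻¹ a) = a
        rw [← ha']; exact Equiv.apply_symm_apply _ _
      have h1 := hHfree _ (mul_mem h₁.2 (inv_mem h₂.2)) a this
      have := mul_inv_eq_one.mp h1
      exact Subtype.ext this
    have hsurj : Function.Surjective φ := by
      rintro ⟨⟨g, hg⟩, hgst⟩
      rw [MulAction.mem_stabilizer_iff] at hgst
      have hga : g a ∈ MulAction.orbit H a := by
        have : g a ∈ g • (MulAction.orbit H a) :=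
          Set.smul_mem_smul_set (MulAction.mem_orbit_self a)
        rw [show (⟨g, hg⟩ : G) • MulAction.orbit H a = g • MulAction.orbit H a from rfl] at hgst
        rwa [hgst] at this
      obtain ⟨h, hh⟩ := hga
      refine ⟨h⁻¹, ?_⟩
      have : gg h⁻¹ = g := by
        apply huniq _ (hgg _) _ hg a
        rw [hgga h⁻¹]
        simp only [InvMemClass.coe_inv, inv_inv]
        exact hh
      exact Subtype.ext (Subtype.ext this)
    exact ⟨(MulEquiv.ofBijective φ ⟨hinj, hsurj⟩).symm⟩

end PaperPGL
end
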